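/- arXiv:2112.15534 — 7 statements merged into one kernel-verified Lean document; each statement's English description precedes it below -/
import Mathlib

section
/- For every distribution function F and all integers k,n ≥ 1, the probability p_{k,n}^{(F)} that the first vector is a maximum satisfies p_{k,n}^{(F)} ≤ p_{k,n}^{(U)}, where p_{k,n}^{(U)} is the corresponding probability when the coordinates are uniformly distributed on [0,1] (equivalently, when the coordinate distribution is any continuous distribution). -/
open MeasureTheory ProbabilityTheory Filter Topology

/-- `X i` is a (strong) maximum, with respect to the coordinatewise product order, among
the sample `X 0, …, X (n-1)` of vectors of dimension `k`. -/
def IsParetoMax {Ω : Type*} (X : ℕ → ℕ → Ω → ℝ) (k n i : ℕ) (ω : Ω) : Prop :=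
  ∀ j < n, j ≠ i → ¬ (∀ m < k, X i m ω ≤ X j m ω)

section Aux

/-- Extended-real-valued generalized inverse (quantile) of a function `F`. -/
noncomputable def quantE (F : ℝ → ℝ) (v : ℝ) : EReal :=
  sInf ((fun r : ℝ => (r : EReal)) '' {r : ℝ | v ≤ F r})

/-- Real-valued generalized inverse (quantile) of a function `F`. -/
noncomputable def quant (F : ℝ → ℝ) (v : ℝ) : ℝ := (quantE F v).toReal

lemma quantE_mono (F : ℝ → ℝ) : Monotone (quantE F) := by
  intro u v huv
  exact sInf_le_sInf (Set.image_mono (fun r hr => le_trans huv hr))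

lemma measurable_quant (F : ℝ → ℝ) : Measurable (quant F) :=
  measurable_ereal_toReal.comp (quantE_mono F).measurable

lemma quantE_ne_top {F : ℝ → ℝ} (htop : Tendsto F atTop (𝓝 1)) {v : ℝ} (hv : v < 1) :
    quantE F v ≠ ⊤ := by
  obtain ⟨x, hx⟩ := (htop.eventually (eventually_gt_nhds hv)).exists
  exact ne_top_of_le_ne_top (EReal.coe_lt_top x).ne
    (sInf_le ⟨x, le_of_lt hx, rfl⟩)

lemma quantE_ne_bot {F : ℝ → ℝ} (hF : Monotone F) (hbot : Tendsto F atBot (𝓝 0)) {v : ℝ}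
    (hv : 0 < v) : quantE F v ≠ ⊥ := by
  obtain ⟨x, hx⟩ := (hbot.eventually (eventually_lt_nhds hv)).exists
  refine ne_bot_of_le_ne_bot (EReal.bot_lt_coe x).ne' (le_sInf ?_)
  rintro _ ⟨r, hr, rfl⟩
  have hxr : x ≤ r := by
    by_contra h
    exact absurd (le_trans hr (hF (le_of_not_ge h))) (not_le.mpr hx)
  show (x : EReal) ≤ (r : EReal)
  exact_mod_cast hxr

lemma le_F_quant {F : ℝ → ℝ} (hF : Monotone F)
    (hrc : ∀ a, ContinuousWithinAt F (Set.Ici a) a)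
    (htop : Tendsto F atTop (𝓝 1)) (hbot : Tendsto F atBot (𝓝 0))
    {v : ℝ} (hv0 : 0 < v) (hv1 : v < 1) : v ≤ F (quant F v) := by
  set a := quant F v with ha
  have hcoe : ((a : ℝ) : EReal) = quantE F v :=
    EReal.coe_toReal (quantE_ne_top htop hv1) (quantE_ne_bot hF hbot hv0)
  have hev : ∀ᶠ y in 𝓝[>] a, v ≤ F y := by
    filter_upwards [self_mem_nhdsWithin] with y hy
    have : quantE F v < (y : EReal) := by rw [← hcoe]; exact_mod_cast hy
    obtain ⟨z, hz, hzy⟩ := sInf_lt_iff.mp this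
    obtain ⟨r, hr, rfl⟩ := hz
    have hry : (r : EReal) < (y : EReal) := hzy
    exact le_trans hr (hF (le_of_lt (by exact_mod_cast hry)))
  have htd : Tendsto F (𝓝[>] a) (𝓝 (F a)) :=
    ((hrc a).tendsto).mono_left (nhdsWithin_mono a Set.Ioi_subset_Ici_self)
  exact ge_of_tendsto htd hev

lemma quant_le_iff {F : ℝ → ℝ} (hF : Monotone F)
    (hrc : ∀ a, ContinuousWithinAt F (Set.Ici a) a)
    (htop : Tendsto F atTop (𝓝 1)) (hbot : Tendsto F atBot (𝓝 0))
    {v : ℝ} (hv0 : 0 < v) (hv1 : v < 1) (x : ℝ) : quant F v ≤ x ↔ v ≤ F x := by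
  have hcoe : ((quant F v : ℝ) : EReal) = quantE F v :=
    EReal.coe_toReal (quantE_ne_top htop hv1) (quantE_ne_bot hF hbot hv0)
  constructor
  · intro h
    exact le_trans (le_F_quant hF hrc htop hbot hv0 hv1) (hF h)
  · intro h
    have : quantE F v ≤ (x : EReal) := sInf_le ⟨x, h, rfl⟩
    rw [← hcoe] at this
    exact_mod_cast this

lemma quant_mono_on {F : ℝ → ℝ} (hF : Monotone F)
    (htop : Tendsto F atTop (𝓝 1)) (hbot : Tendsto F atBot (𝓝 0))
    {u v : ℝ} (hu0 : 0 < u) (hv1 : v < 1) (huv : u ≤ v) : quant F u ≤ quant F v :=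
  EReal.toReal_le_toReal (quantE_mono F huv) (quantE_ne_bot hF hbot hu0)
    (quantE_ne_top htop hv1)

/-- The law of `quant (cdf μ) ∘ W` is `μ` when `W` is uniform on `[0,1]`. -/
lemma map_quant_uniform {Ω : Type*} [MeasurableSpace Ω] (P : Measure Ω) [IsProbabilityMeasure P]
    (μ : Measure ℝ) [IsProbabilityMeasure μ] (W : Ω → ℝ) (hW : Measurable W)
    (hWlaw : Measure.map W P = volume.restrict (Set.Icc (0 : ℝ) 1)) :
    P.map (fun ω => quant (cdf μ) (W ω)) = μ := by
  have hG : Measurable (quant (cdf μ)) := measurable_quant _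
  haveI : IsProbabilityMeasure (P.map (fun ω => quant (cdf μ) (W ω))) :=
    Measure.isProbabilityMeasure_map ((hG.comp hW).aemeasurable)
  refine Measure.ext_of_Iic _ _ (fun x => ?_)
  have hA : MeasurableSet (quant (cdf μ) ⁻¹' Set.Iic x) := hG measurableSet_Iic
  have hGW : Measurable (fun ω => quant (cdf μ) (W ω)) := hG.comp hW
  rw [Measure.map_apply hGW measurableSet_Iic]
  have h1 : (fun ω => quant (cdf μ) (W ω)) ⁻¹' Set.Iic x
      = W ⁻¹' (quant (cdf μ) ⁻¹' Set.Iic x) := rfl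
  rw [h1, ← Measure.map_apply hW hA, hWlaw, Measure.restrict_apply hA]
  have hae : ((quant (cdf μ) ⁻¹' Set.Iic x ∩ Set.Icc 0 1 : Set ℝ))
      =ᵐ[volume] ((quant (cdf μ) ⁻¹' Set.Iic x ∩ Set.Ioo 0 1 : Set ℝ)) :=
    (EventuallyEq.refl _ _).inter (Ioo_ae_eq_Icc (a := (0:ℝ)) (b := 1)).symm
  rw [measure_congr hae]
  have hset : quant (cdf μ) ⁻¹' Set.Iic x ∩ Set.Ioo 0 1 = Set.Iic (cdf μ x) ∩ Set.Ioo 0 1 := by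
    ext v
    simp only [Set.mem_inter_iff, Set.mem_preimage, Set.mem_Iic, Set.mem_Ioo]
    constructor
    · rintro ⟨h, hv0, hv1⟩
      exact ⟨(quant_le_iff (monotone_cdf μ) (cdf μ).right_continuous (tendsto_cdf_atTop μ)
        (tendsto_cdf_atBot μ) hv0 hv1 x).mp h, hv0, hv1⟩
    · rintro ⟨h, hv0, hv1⟩
      exact ⟨(quant_le_iff (monotone_cdf μ) (cdf μ).right_continuous (tendsto_cdf_atTop μ)
        (tendsto_cdf_atBot μ) hv0 hv1 x).mpr h, hv0, hv1⟩
  rw [hset]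
  rw [← ofReal_cdf μ x]
  have h0 : (0:ℝ) ≤ cdf μ x := cdf_nonneg μ x
  have h1' : cdf μ x ≤ 1 := cdf_le_one μ x
  rcases lt_or_eq_of_le h1' with h | h
  · have : Set.Iic (cdf μ x) ∩ Set.Ioo 0 1 = Set.Ioc 0 (cdf μ x) := by
      ext v
      simp only [Set.mem_inter_iff, Set.mem_Iic, Set.mem_Ioo, Set.mem_Ioc]
      constructor
      · rintro ⟨hv, hv0, _⟩; exact ⟨hv0, hv⟩
      · rintro ⟨hv0, hv⟩; exact ⟨hv, hv0, lt_of_le_of_lt hv h⟩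
    rw [this, Real.volume_Ioc, sub_zero]
  · have : Set.Iic (cdf μ x) ∩ Set.Ioo 0 1 = Set.Ioo 0 1 := by
      ext v
      simp only [Set.mem_inter_iff, Set.mem_Iic, Set.mem_Ioo]
      exact ⟨fun hv => hv.2, fun hv => ⟨le_of_lt (h ▸ hv.2), hv⟩⟩
    rw [this, Real.volume_Ioo, sub_zero, h]

/-- The joint law of `(n*k)` coordinates of an iid array is the product measure. -/
lemma map_array_eq_pi {Ω : Type*} [MeasurableSpace Ω] (P : Measure Ω) [IsProbabilityMeasure P]
    (Z : ℕ → ℕ → Ω → ℝ) (hmeas : ∀ i j, Measurable (Z i j))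
    (hindep : iIndepFun (fun q : ℕ × ℕ => Z q.1 q.2) P)
    (ν : Measure ℝ) [IsProbabilityMeasure ν] (hlaw : ∀ i j, P.map (Z i j) = ν) (n k : ℕ) :
    P.map (fun ω (p : Fin n × Fin k) => Z p.1.val p.2.val ω)
      = Measure.pi (fun _ : Fin n × Fin k => ν) := by
  have hΦ : Measurable (fun ω (p : Fin n × Fin k) => Z p.1.val p.2.val ω) :=
    measurable_pi_lambda _ (fun p => hmeas _ _)
  classical
  refine (Measure.pi_eq (μ := fun _ : Fin n × Fin k => ν) (fun s hs => ?_)).symm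
  set sets : ℕ × ℕ → Set ℝ := fun q =>
    if h : q.1 < n ∧ q.2 < k then s (⟨q.1, h.1⟩, ⟨q.2, h.2⟩) else Set.univ with hsets_def
  have hsets_meas : ∀ q ∈ Finset.range n ×ˢ Finset.range k, MeasurableSet (sets q) := by
    intro q _
    by_cases h : q.1 < n ∧ q.2 < k
    · simp only [hsets_def, dif_pos h]; exact hs _
    · simp only [hsets_def, dif_neg h]; exact MeasurableSet.univ
  have hsets_eq : ∀ p : Fin n × Fin k, sets (p.1.val, p.2.val) = s p := by
    rintro ⟨⟨a, ha⟩, ⟨b, hb⟩⟩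
    simp only [hsets_def, dif_pos (And.intro ha hb)]
  rw [Measure.map_apply hΦ (MeasurableSet.univ_pi hs)]
  have hpre : (fun ω (p : Fin n × Fin k) => Z p.1.val p.2.val ω) ⁻¹' Set.univ.pi s
      = ⋂ q ∈ Finset.range n ×ˢ Finset.range k, (fun ω => Z q.1 q.2 ω) ⁻¹' sets q := by
    ext ω
    simp only [Set.mem_preimage, Set.mem_univ_pi, Set.mem_iInter, Finset.mem_product,
      Finset.mem_range]
    constructor
    · intro h q hq
      have hq1 : q.1 < n := hq.1
      have hq2 : q.2 < k := hq.2
      have := h (⟨q.1, hq1⟩, ⟨q.2, hq2⟩)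
      simpa [hsets_def, dif_pos (And.intro hq1 hq2)] using this
    · intro h p
      have := h (p.1.val, p.2.val) ⟨p.1.isLt, p.2.isLt⟩
      rwa [hsets_eq p] at this
  rw [hpre, hindep.measure_inter_preimage_eq_mul _ hsets_meas]
  rw [Finset.prod_product]
  have hfac : ∀ q : ℕ × ℕ, P ((fun ω => Z q.1 q.2 ω) ⁻¹' sets q) = ν (sets q) := by
    intro q
    by_cases h : q.1 < n ∧ q.2 < k
    · rw [← hlaw q.1 q.2]
      exact (Measure.map_apply (hmeas _ _)
        (by simp only [hsets_def, dif_pos h]; exact hs _)).symm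
    · simp only [hsets_def, dif_neg h]
      simp [measure_univ]
  calc (∏ a ∈ Finset.range n, ∏ b ∈ Finset.range k, P ((fun ω => Z a b ω) ⁻¹' sets (a, b)))
      = ∏ a ∈ Finset.range n, ∏ b ∈ Finset.range k, ν (sets (a, b)) := by
        refine Finset.prod_congr rfl fun a _ => Finset.prod_congr rfl fun b _ => hfac (a, b)
    _ = ∏ a : Fin n, ∏ b : Fin k, ν (sets (a.val, b.val)) := by
        rw [← Fin.prod_univ_eq_prod_range (fun a => ∏ b ∈ Finset.range k, ν (sets (a, b))) n]
        exact Finset.prod_congr rfl fun a _ =>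
          (Fin.prod_univ_eq_prod_range (fun b => ν (sets (a.val, b))) k).symm
    _ = ∏ p : Fin n × Fin k, ν (sets (p.1.val, p.2.val)) :=
        (Fintype.prod_prod_type (f := fun p : Fin n × Fin k => ν (sets (p.1.val, p.2.val)))).symm
    _ = ∏ p : Fin n × Fin k, ν (s p) :=
        Finset.prod_congr rfl fun p _ => by rw [hsets_eq p]

lemma event_eq_preimage {Ω : Type*} (Z : ℕ → ℕ → Ω → ℝ) (k n : ℕ) (hn0 : 0 < n) :
    {ω | IsParetoMax Z k n 0 ω}
      = (fun ω (p : Fin n × Fin k) => Z p.1.val p.2.val ω) ⁻¹'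
        {g | ∀ j : Fin n, j.val ≠ 0 → ∃ m : Fin k, g (j, m) < g (⟨0, hn0⟩, m)} := by
  ext ω
  simp only [Set.mem_setOf_eq, Set.mem_preimage, IsParetoMax]
  constructor
  · intro h j hj
    have := h j.val j.isLt hj
    push_neg at this
    obtain ⟨m, hm, hlt⟩ := this
    exact ⟨⟨m, hm⟩, hlt⟩
  · intro h j hjn hj0 hall
    obtain ⟨m, hm⟩ := h ⟨j, hjn⟩ hj0
    exact absurd (hall m.val m.isLt) (not_le.mpr hm)

end Aux

/-- for every distribution `F` of the iid coordinates (array `X`), the probability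
`p_{k,n}^{(F)}` that the first vector is a maximum is at most the corresponding probability
`p_{k,n}^{(U)}` for an iid array `U` of coordinates uniformly distributed on `[0,1]`. -/
theorem stmt_4 {Ω₁ Ω₂ : Type*} [MeasurableSpace Ω₁] [MeasurableSpace Ω₂]
    (P₁ : Measure Ω₁) [IsProbabilityMeasure P₁] (P₂ : Measure Ω₂) [IsProbabilityMeasure P₂]
    (X : ℕ → ℕ → Ω₁ → ℝ) (U : ℕ → ℕ → Ω₂ → ℝ)
    (hXmeas : ∀ i j, Measurable (X i j))
    (hXindep : iIndepFun (fun q : ℕ × ℕ => X q.1 q.2) P₁)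
    (hXident : ∀ i j, IdentDistrib (X i j) (X 0 0) P₁ P₁)
    (hUmeas : ∀ i j, Measurable (U i j))
    (hUindep : iIndepFun (fun q : ℕ × ℕ => U q.1 q.2) P₂)
    (hUunif : ∀ i j, Measure.map (U i j) P₂ = volume.restrict (Set.Icc (0 : ℝ) 1))
    (k n : ℕ) (hk : 1 ≤ k) (hn : 1 ≤ n) :
    P₁ {ω | IsParetoMax X k n 0 ω} ≤ P₂ {ω | IsParetoMax U k n 0 ω} := by
  set μ : Measure ℝ := P₁.map (X 0 0) with hμ
  haveI : IsProbabilityMeasure μ := Measure.isProbabilityMeasure_map (hXmeas 0 0).aemeasurable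
  set G : ℝ → ℝ := quant (cdf μ) with hG_def
  have hG : Measurable G := measurable_quant _
  set Y : ℕ → ℕ → Ω₂ → ℝ := fun i j ω => G (U i j ω) with hY_def
  have hYmeas : ∀ i j, Measurable (Y i j) := fun i j => hG.comp (hUmeas i j)
  have hYindep : iIndepFun (fun q : ℕ × ℕ => Y q.1 q.2) P₂ :=
    hUindep.comp (fun _ => G) (fun _ => hG)
  have hYlaw : ∀ i j, P₂.map (Y i j) = μ := fun i j =>
    map_quant_uniform P₂ μ (U i j) (hUmeas i j) (hUunif i j)
  have hXlaw : ∀ i j, P₁.map (X i j) = μ := fun i j => (hXident i j).map_eq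
  have hn0 : 0 < n := hn
  -- the "Pareto max" event as a preimage
  set S : Set (Fin n × Fin k → ℝ) :=
    {g | ∀ j : Fin n, j.val ≠ 0 → ∃ m : Fin k, g (j, m) < g (⟨0, hn0⟩, m)} with hS_def
  have hS_meas : MeasurableSet S := by
    have : S = ⋂ j : Fin n, ⋂ (_ : j.val ≠ 0), ⋃ m : Fin k,
        {g : Fin n × Fin k → ℝ | g (j, m) < g (⟨0, hn0⟩, m)} := by
      ext g
      simp only [hS_def, Set.mem_setOf_eq, Set.mem_iInter, Set.mem_iUnion]
    rw [this]
    exact MeasurableSet.iInter fun j => MeasurableSet.iInter fun _ =>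
      MeasurableSet.iUnion fun m =>
        measurableSet_lt (measurable_pi_apply _) (measurable_pi_apply _)
  -- equality of the two probabilities via the product measure
  have hXpi := map_array_eq_pi P₁ X hXmeas hXindep μ hXlaw n k
  have hYpi := map_array_eq_pi P₂ Y hYmeas hYindep μ hYlaw n k
  have hΦX : Measurable (fun ω (p : Fin n × Fin k) => X p.1.val p.2.val ω) :=
    measurable_pi_lambda _ (fun p => hXmeas _ _)
  have hΦY : Measurable (fun ω (p : Fin n × Fin k) => Y p.1.val p.2.val ω) :=
    measurable_pi_lambda _ (fun p => hYmeas _ _)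
  have heq : P₁ {ω | IsParetoMax X k n 0 ω} = P₂ {ω | IsParetoMax Y k n 0 ω} := by
    rw [show {ω | IsParetoMax X k n 0 ω} = _ from event_eq_preimage X k n hn0,
      show {ω | IsParetoMax Y k n 0 ω} = _ from event_eq_preimage Y k n hn0,
      ← Measure.map_apply hΦX hS_meas, ← Measure.map_apply hΦY hS_meas, hXpi, hYpi]
  rw [heq]
  -- comparison between Y and U
  refine measure_mono_ae ?_
  have hae : ∀ᵐ ω ∂P₂, ∀ q : ℕ × ℕ, U q.1 q.2 ω ∈ Set.Ioo (0:ℝ) 1 := by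
    rw [ae_all_iff]
    intro q
    rw [ae_iff]
    have hcompl : MeasurableSet (Set.Ioo (0:ℝ) 1)ᶜ := measurableSet_Ioo.compl
    have : {ω | ¬ U q.1 q.2 ω ∈ Set.Ioo (0:ℝ) 1} = U q.1 q.2 ⁻¹' (Set.Ioo (0:ℝ) 1)ᶜ := rfl
    rw [this, ← Measure.map_apply (hUmeas q.1 q.2) hcompl, hUunif q.1 q.2,
      Measure.restrict_apply hcompl]
    have : (Set.Ioo (0:ℝ) 1)ᶜ ∩ Set.Icc 0 1 = Set.Icc (0:ℝ) 1 \ Set.Ioo 0 1 := by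
      rw [Set.diff_eq, Set.inter_comm]
    rw [this, Set.Icc_diff_Ioo_same (by norm_num : (0:ℝ) ≤ 1)]
    refine le_antisymm ?_ zero_le
    calc volume ({(0:ℝ), 1} : Set ℝ) ≤ volume ({(0:ℝ)} : Set ℝ) + volume ({(1:ℝ)} : Set ℝ) :=
          measure_union_le _ _
      _ = 0 := by simp
  filter_upwards [hae] with ω hω hY
  intro j hjn hj0 hall
  refine hY j hjn hj0 ?_
  intro m hm
  have h0 := hω (0, m)
  have hj := hω (j, m)
  exact quant_mono_on (monotone_cdf μ) (tendsto_cdf_atTop μ) (tendsto_cdf_atBot μ)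
    h0.1 hj.2 (hall m hm)
end

section
/- Let F be a distribution function and let p ∈ {1 − F(x) : x ∈ ℝ} with p ∈ (0,1). Then for all integers k,n ≥ 1, the probability of being a maximum when the coordinates have a Bernoulli(p) distribution is at most the probability of being a maximum when the coordinates have distribution F; that is, p_{k,n}^{(p)} ≤ p_{k,n}^{(F)}. -/
open MeasureTheory ProbabilityTheory Filter
open scoped Classical ENNReal

/-- real value of a bit -/
def bval (b : Bool) : ℝ := if b then 1 else 0

lemma bval_injective : Function.Injective bval := by
  intro a b h
  cases a <;> cases b <;> simp [bval] at h ⊢ <;> linarith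

/-- extend a finite boolean configuration to `ℕ × ℕ` -/
def emb (n k : ℕ) (c : Fin n × Fin k → Bool) : ℕ × ℕ → Bool :=
  fun q => if h : q.1 < n ∧ q.2 < k then c (⟨q.1, h.1⟩, ⟨q.2, h.2⟩) else false

lemma emb_apply (n k : ℕ) (c : Fin n × Fin k → Bool) (j : Fin n) (m : Fin k) :
    emb n k c ((j : ℕ), (m : ℕ)) = c (j, m) := by
  simp [emb, j.2, m.2]

/-- boolean Pareto-maximality predicate for a configuration -/
def Gd (n k : ℕ) (f : ℕ × ℕ → Bool) : Prop :=
  ∀ j < n, j ≠ 0 → ∃ m < k, f (0, m) = true ∧ f (j, m) = false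

/-- the probability that index 0 is a Pareto max in an iid Bernoulli(p) sample -/
noncomputable def bernVal (p : ℝ) (k n : ℕ) : ℝ≥0∞ :=
  ∑ c ∈ Finset.univ.filter (fun c : Fin n × Fin k → Bool => Gd n k (emb n k c)),
    ∏ q ∈ Finset.range n ×ˢ Finset.range k,
      (if emb n k c q then ENNReal.ofReal p else ENNReal.ofReal (1 - p))

lemma key {Ω : Type*} [MeasurableSpace Ω] (P : Measure Ω) [IsProbabilityMeasure P]
    (W : ℕ → ℕ → Ω → ℝ) (p : ℝ) (hp : p ∈ Set.Ioo (0 : ℝ) 1)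
    (hmeas : ∀ i j, Measurable (W i j))
    (hindep : iIndepFun (fun q : ℕ × ℕ => W q.1 q.2) P)
    (hval : ∀ i j ω, W i j ω = 0 ∨ W i j ω = 1)
    (hWp : ∀ i j, P {ω | W i j ω = 1} = ENNReal.ofReal p)
    (k n : ℕ) :
    P {ω | IsParetoMax W k n 0 ω} = bernVal p k n := by
  classical
  set S : Finset (ℕ × ℕ) := Finset.range n ×ˢ Finset.range k with hS
  -- measurability of level sets
  have hms : ∀ (i j : ℕ) (v : ℝ), MeasurableSet {ω | W i j ω = v} := by
    intro i j v
    have : {ω | W i j ω = v} = W i j ⁻¹' {v} := rfl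
    rw [this]
    exact (hmeas i j) (measurableSet_singleton v)
  -- probability of value 0
  have hW0 : ∀ i j, P {ω | W i j ω = 0} = ENNReal.ofReal (1 - p) := by
    intro i j
    have hcompl : {ω | W i j ω = 0} = {ω | W i j ω = 1}ᶜ := by
      ext ω
      rcases hval i j ω with h | h <;> simp [h]
    rw [hcompl, measure_compl (hms i j 1) (measure_ne_top _ _), hWp i j,
      ENNReal.ofReal_sub 1 hp.1.le, ENNReal.ofReal_one, measure_univ]
  -- the elementary events
  set E : (Fin n × Fin k → Bool) → Set Ω :=
    fun c => ⋂ q ∈ S, {ω | W q.1 q.2 ω = bval (emb n k c q)} with hE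
  -- set decomposition
  have hset : {ω | IsParetoMax W k n 0 ω}
      = ⋃ c ∈ Finset.univ.filter (fun c : Fin n × Fin k → Bool => Gd n k (emb n k c)), E c := by
    ext ω
    simp only [Set.mem_setOf_eq, Set.mem_iUnion, Finset.mem_filter, Finset.mem_univ, true_and]
    constructor
    · intro h
      refine ⟨fun q => decide (W q.1 q.2 ω = 1), ?_, ?_⟩
      · -- Gd holds
        intro j hj hj0
        have hmax := h j hj hj0
        push_neg at hmax
        obtain ⟨m, hm, hlt⟩ := hmax
        have h0n : 0 < n := lt_of_le_of_lt (Nat.zero_le j) hj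
        have h0 : W 0 m ω = 1 := by
          rcases hval 0 m ω with h' | h'
          · exfalso; rcases hval j m ω with h'' | h'' <;> rw [h', h''] at hlt <;> linarith
          · exact h'
        have hjm : W j m ω = 0 := by
          rcases hval j m ω with h' | h'
          · exact h'
          · exfalso; rw [h0, h'] at hlt; linarith
        refine ⟨m, hm, ?_, ?_⟩
        · simp [emb, h0n, hm, h0]
        · simp [emb, hj, hm, hjm]
      · -- ω ∈ E c
        rw [hE]
        refine Set.mem_iInter₂.2 fun q hq => ?_
        simp only [hS, Finset.mem_product, Finset.mem_range] at hq
        simp only [Set.mem_setOf_eq, emb, hq.1, hq.2, and_self, dif_pos]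
        rcases hval q.1 q.2 ω with h' | h' <;> simp [h', bval]
    · rintro ⟨c, hGd, hmem⟩
      intro j hj hj0
      obtain ⟨m, hm, h0t, hjf⟩ := hGd j hj hj0
      have h0n : 0 < n := lt_of_le_of_lt (Nat.zero_le j) hj
      rw [hE] at hmem
      have hmem' := Set.mem_iInter₂.1 hmem
      have h0 : W 0 m ω = bval (emb n k c (0, m)) := by
        have : ((0 : ℕ), m) ∈ S := by simp [hS, h0n, hm]
        exact hmem' _ this
      have hjm : W j m ω = bval (emb n k c (j, m)) := by
        have : ((j : ℕ), m) ∈ S := by simp [hS, hj, hm]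
        exact hmem' _ this
      rw [h0t] at h0
      rw [hjf] at hjm
      norm_num [bval] at h0 hjm
      intro hall
      have := hall m hm
      rw [h0, hjm] at this
      linarith
  -- measurability of elementary events
  have hEmeas : ∀ c, MeasurableSet (E c) := by
    intro c
    exact MeasurableSet.biInter S.countable_toSet fun q _ => hms q.1 q.2 _
  -- disjointness
  have hdisj : (↑(Finset.univ.filter (fun c : Fin n × Fin k → Bool => Gd n k (emb n k c)))
      : Set (Fin n × Fin k → Bool)).PairwiseDisjoint E := by
    intro c _ c' _ hne
    refine Set.disjoint_left.2 fun ω hω hω' => hne ?_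
    funext q
    obtain ⟨j, m⟩ := q
    have hqS : ((j : ℕ), (m : ℕ)) ∈ S := by simp [hS, j.2, m.2]
    have h1 := Set.mem_iInter₂.1 hω _ hqS
    have h2 := Set.mem_iInter₂.1 hω' _ hqS
    simp only [Set.mem_setOf_eq] at h1 h2
    have : bval (emb n k c ((j : ℕ), (m : ℕ))) = bval (emb n k c' ((j : ℕ), (m : ℕ))) := by
      rw [← h1, ← h2]
    have := bval_injective this
    rwa [emb_apply, emb_apply] at this
  rw [hset, measure_biUnion_finset hdisj fun c _ => hEmeas c]
  refine Finset.sum_congr rfl fun c _ => ?_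
  -- probability of an elementary event
  have hprod := hindep.meas_biInter (S := S)
    (s := fun q => {ω | W q.1 q.2 ω = bval (emb n k c q)})
    (fun q _ => ⟨{bval (emb n k c q)}, measurableSet_singleton _, rfl⟩)
  rw [hE, hprod]
  refine Finset.prod_congr rfl fun q _ => ?_
  cases hb : emb n k c q <;> simp only [hb, bval] <;> norm_num
  · exact hW0 q.1 q.2
  · exact hWp q.1 q.2

/-- if `p = 1 - F(x)` for some `x ∈ ℝ` and `p ∈ (0,1)`, then the probability of
being a maximum for iid Bernoulli(p) coordinates (array `Y`) is at most the probability of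
being a maximum for iid coordinates with distribution `F` (array `X`). -/
theorem stmt_5 {Ω₁ Ω₂ : Type*} [MeasurableSpace Ω₁] [MeasurableSpace Ω₂]
    (P₁ : Measure Ω₁) [IsProbabilityMeasure P₁] (P₂ : Measure Ω₂) [IsProbabilityMeasure P₂]
    (X : ℕ → ℕ → Ω₁ → ℝ) (Y : ℕ → ℕ → Ω₂ → ℝ) (p : ℝ) (hp : p ∈ Set.Ioo (0 : ℝ) 1)
    (hXmeas : ∀ i j, Measurable (X i j))
    (hXindep : iIndepFun (fun q : ℕ × ℕ => X q.1 q.2) P₁)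
    (hXident : ∀ i j, IdentDistrib (X i j) (X 0 0) P₁ P₁)
    (hYmeas : ∀ i j, Measurable (Y i j))
    (hYindep : iIndepFun (fun q : ℕ × ℕ => Y q.1 q.2) P₂)
    (hYval : ∀ i j ω, Y i j ω = 0 ∨ Y i j ω = 1)
    (hYp : ∀ i j, P₂ {ω | Y i j ω = 1} = ENNReal.ofReal p)
    (hpF : ∃ x : ℝ, P₁ {ω | x < X 0 0 ω} = ENNReal.ofReal p)
    (k n : ℕ) (hk : 1 ≤ k) (hn : 1 ≤ n) :
    P₂ {ω | IsParetoMax Y k n 0 ω} ≤ P₁ {ω | IsParetoMax X k n 0 ω} := by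
  obtain ⟨x, hx⟩ := hpF
  -- the thresholded array
  set Z : ℕ → ℕ → Ω₁ → ℝ := fun i j ω => if x < X i j ω then 1 else 0 with hZ
  have hZmeas : ∀ i j, Measurable (Z i j) := fun i j =>
    Measurable.ite (measurableSet_lt measurable_const (hXmeas i j))
      measurable_const measurable_const
  have hZindep : iIndepFun
      (fun q : ℕ × ℕ => Z q.1 q.2) P₁ := by
    have := hXindep.comp (fun _ : ℕ × ℕ => fun t : ℝ => if x < t then (1 : ℝ) else 0)
      (fun _ => Measurable.ite measurableSet_Ioi measurable_const measurable_const)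
    exact this
  have hZval : ∀ i j ω, Z i j ω = 0 ∨ Z i j ω = 1 := by
    intro i j ω
    by_cases h : x < X i j ω <;> simp [hZ, h]
  have hZp : ∀ i j, P₁ {ω | Z i j ω = 1} = ENNReal.ofReal p := by
    intro i j
    have hseteq : {ω | Z i j ω = 1} = X i j ⁻¹' Set.Ioi x := by
      ext ω
      by_cases h : x < X i j ω <;> simp [hZ, h]
    have hset0 : {ω | x < X 0 0 ω} = X 0 0 ⁻¹' Set.Ioi x := rfl
    rw [hseteq, (hXident i j).measure_mem_eq measurableSet_Ioi, ← hset0, hx]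
  have h1 : P₂ {ω | IsParetoMax Y k n 0 ω} = bernVal p k n :=
    key P₂ Y p hp hYmeas hYindep hYval hYp k n
  have h2 : P₁ {ω | IsParetoMax Z k n 0 ω} = bernVal p k n :=
    key P₁ Z p hp hZmeas hZindep hZval hZp k n
  have hsub : {ω | IsParetoMax Z k n 0 ω} ⊆ {ω | IsParetoMax X k n 0 ω} := by
    intro ω hω j hj hj0 hall
    refine hω j hj hj0 fun m hm => ?_
    have hXle := hall m hm
    by_cases h0 : x < X 0 m ω
    · have hj' : x < X j m ω := lt_of_lt_of_le h0 hXle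
      simp [hZ, h0, hj']
    · by_cases hj' : x < X j m ω <;> simp [hZ, h0, hj']
  calc P₂ {ω | IsParetoMax Y k n 0 ω} = bernVal p k n := h1
    _ = P₁ {ω | IsParetoMax Z k n 0 ω} := h2.symm
    _ ≤ P₁ {ω | IsParetoMax X k n 0 ω} := measure_mono hsub
end

section
/- Let the coordinates X_{ij} be i.i.d. Bernoulli(p) random variables for some p ∈ (0,1). Then for all integers k ≥ 1 and n ≥ 1, the probability that the first vector is a (strong) maximum is given exactly by p_{k,n}^{(p)} = Σ_{i=0}^{k} C(k,i) p^i (1−p)^{k−i} (1 − p^i)^{n−1}. -/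
open MeasureTheory ProbabilityTheory Filter
open scoped ENNReal

namespace Stmt13Aux

open Finset

variable {Ω : Type*} [MeasurableSpace Ω] {P : Measure Ω} [IsProbabilityMeasure P]
  {X : ℕ → ℕ → Ω → ℝ}

/-- The atom: on row `j`, the entries on columns `T` match the pattern `U`. -/
def Atm (X : ℕ → ℕ → Ω → ℝ) (j : ℕ) (T U : Finset ℕ) : Set Ω :=
  {ω | ∀ m ∈ T, X j m ω = if m ∈ U then 1 else 0}

open scoped Classical in
/-- The pattern of row `j` on columns `T`. -/
noncomputable def pat (X : ℕ → ℕ → Ω → ℝ) (j : ℕ) (T : Finset ℕ) (ω : Ω) : Finset ℕ :=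
  T.filter (fun m => X j m ω = 1)

lemma pat_subset (j : ℕ) (T : Finset ℕ) (ω : Ω) : pat X j T ω ⊆ T :=
  Finset.filter_subset _ _

lemma mem_Atm (hval : ∀ i j ω, X i j ω = 0 ∨ X i j ω = 1) {j : ℕ} {T U : Finset ℕ}
    (hU : U ⊆ T) (ω : Ω) : ω ∈ Atm X j T U ↔ pat X j T ω = U := by
  classical
  constructor
  · intro h
    ext m
    simp only [pat, Finset.mem_filter]
    constructor
    · rintro ⟨hmT, h1⟩
      by_contra hmU
      have h2 := h m hmT
      rw [if_neg hmU] at h2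
      rw [h2] at h1
      norm_num at h1
    · intro hmU
      refine ⟨hU hmU, ?_⟩
      have h2 := h m (hU hmU)
      rwa [if_pos hmU] at h2
  · rintro rfl m hmT
    by_cases hm : X j m ω = 1
    · rw [if_pos]
      · exact hm
      · simp only [pat, Finset.mem_filter]
        exact ⟨hmT, hm⟩
    · rw [if_neg]
      · rcases hval j m ω with h0 | h1
        · exact h0
        · exact absurd h1 hm
      · simp only [pat, Finset.mem_filter]
        tauto

lemma mem_G (hval : ∀ i j ω, X i j ω = 0 ∨ X i j ω = 1) {j : ℕ} {T : Finset ℕ}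
    {C : Finset (Finset ℕ)} (hC : C ⊆ T.powerset) (ω : Ω) :
    ω ∈ (⋃ U ∈ C, Atm X j T U) ↔ pat X j T ω ∈ C := by
  simp only [Set.mem_iUnion, exists_prop]
  constructor
  · rintro ⟨U, hU, hA⟩
    rwa [(mem_Atm hval (Finset.mem_powerset.1 (hC hU)) ω).1 hA]
  · intro h
    exact ⟨_, h, (mem_Atm hval (pat_subset j T ω) ω).2 rfl⟩

lemma measurableSet_Atm (hmeas : ∀ i j, Measurable (X i j)) (j : ℕ) (T U : Finset ℕ) :
    MeasurableSet (Atm X j T U) := by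
  have h : Atm X j T U = ⋂ m ∈ T, (X j m) ⁻¹' {if m ∈ U then 1 else 0} := by
    ext ω; simp [Atm]
  rw [h]
  exact T.measurableSet_biInter fun m _ => (hmeas j m) (measurableSet_singleton _)

lemma meas_inter_atoms
    (hindep : iIndepFun (fun q : ℕ × ℕ => X q.1 q.2) P)
    (R : Finset ℕ) (T g : ℕ → Finset ℕ) :
    P (⋂ j ∈ R, Atm X j (T j) (g j))
      = ∏ j ∈ R, ∏ m ∈ T j, P {ω | X j m ω = if m ∈ g j then 1 else 0} := by
  classical
  set s : ℕ × ℕ → Set Ω := fun q => {ω | X q.1 q.2 ω = if q.2 ∈ g q.1 then 1 else 0} with hs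
  set F : Finset (ℕ × ℕ) := R.biUnion (fun j => (T j).image fun m => (j, m)) with hF
  have hset : (⋂ j ∈ R, Atm X j (T j) (g j)) = ⋂ q ∈ F, s q := by
    ext ω
    simp only [Set.mem_iInter, hF, Finset.mem_biUnion, Finset.mem_image, Atm,
      Set.mem_setOf_eq, hs]
    constructor
    · rintro h q ⟨j, hj, m, hm, rfl⟩
      exact h j hj m hm
    · intro h j hj m hm
      exact h (j, m) ⟨j, hj, m, hm, rfl⟩
  have hdisj : (↑R : Set ℕ).PairwiseDisjoint (fun j => (T j).image fun m => (j, m)) := by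
    intro j _ j' _ hne
    simp only [Function.onFun, Finset.disjoint_left, Finset.mem_image]
    rintro q ⟨m, _, rfl⟩ ⟨m', _, h⟩
    exact hne (congrArg Prod.fst h).symm
  calc P (⋂ j ∈ R, Atm X j (T j) (g j)) = P (⋂ q ∈ F, s q) := by rw [hset]
    _ = ∏ q ∈ F, P (s q) := by
        refine hindep.meas_biInter fun q _ => ?_
        exact ⟨{if q.2 ∈ g q.1 then 1 else 0}, measurableSet_singleton _, rfl⟩
    _ = ∏ j ∈ R, ∏ q ∈ (T j).image (fun m => (j, m)), P (s q) := Finset.prod_biUnion hdisj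
    _ = ∏ j ∈ R, ∏ m ∈ T j, P {ω | X j m ω = if m ∈ g j then 1 else 0} := by
        refine Finset.prod_congr rfl fun j _ => ?_
        rw [Finset.prod_image (fun m _ m' _ h => by simpa using h)]

lemma meas_rows (hval : ∀ i j ω, X i j ω = 0 ∨ X i j ω = 1)
    (hmeas : ∀ i j, Measurable (X i j))
    (hindep : iIndepFun (fun q : ℕ × ℕ => X q.1 q.2) P)
    (R : Finset ℕ) (T : ℕ → Finset ℕ) (C : ℕ → Finset (Finset ℕ))
    (hC : ∀ j ∈ R, C j ⊆ (T j).powerset) :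
    P (⋂ j ∈ R, ⋃ U ∈ C j, Atm X j (T j) U)
      = ∏ j ∈ R, ∑ U ∈ C j, ∏ m ∈ T j, P {ω | X j m ω = if m ∈ U then 1 else 0} := by
  classical
  set ext : (∀ j ∈ R, Finset ℕ) → ℕ → Finset ℕ :=
    fun g j => if h : j ∈ R then g j h else ∅ with hext
  have hdec : (⋂ j ∈ R, ⋃ U ∈ C j, Atm X j (T j) U)
      = ⋃ g ∈ R.pi C, ⋂ j ∈ R, Atm X j (T j) (ext g j) := by
    ext ω
    simp only [Set.mem_iInter, Set.mem_iUnion, exists_prop]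
    constructor
    · intro h
      refine ⟨fun j hj => pat X j (T j) ω, ?_, ?_⟩
      · rw [Finset.mem_pi]
        intro j hj
        exact (mem_G hval (hC j hj) ω).1 (by
          simpa only [Set.mem_iUnion, exists_prop] using h j hj)
      · intro j hj
        simp only [hext, dif_pos hj]
        exact (mem_Atm hval (pat_subset j (T j) ω) ω).2 rfl
    · rintro ⟨g, hg, h⟩ j hj
      have h1 := h j hj
      simp only [hext, dif_pos hj] at h1
      exact ⟨g j hj, Finset.mem_pi.1 hg j hj, h1⟩
  have hpd : (↑(R.pi C) : Set (∀ j ∈ R, Finset ℕ)).PairwiseDisjoint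
      (fun g => ⋂ j ∈ R, Atm X j (T j) (ext g j)) := by
    intro g hg g' hg' hne
    rw [Function.onFun, Set.disjoint_left]
    intro ω hω hω'
    apply hne
    funext j hj
    have hCsub : g j hj ⊆ T j :=
      Finset.mem_powerset.1 (hC j hj (Finset.mem_pi.1 (Finset.mem_coe.1 hg) j hj))
    have hCsub' : g' j hj ⊆ T j :=
      Finset.mem_powerset.1 (hC j hj (Finset.mem_pi.1 (Finset.mem_coe.1 hg') j hj))
    have h1 : ω ∈ Atm X j (T j) (ext g j) := Set.mem_iInter₂.1 hω j hj
    have h2 : ω ∈ Atm X j (T j) (ext g' j) := Set.mem_iInter₂.1 hω' j hj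
    simp only [hext, dif_pos hj] at h1 h2
    rw [← (mem_Atm hval hCsub ω).1 h1, ← (mem_Atm hval hCsub' ω).1 h2]
  have hmeaspiece : ∀ g ∈ R.pi C, MeasurableSet (⋂ j ∈ R, Atm X j (T j) (ext g j)) :=
    fun g _ => R.measurableSet_biInter fun j _ => measurableSet_Atm hmeas j _ _
  rw [hdec, measure_biUnion_finset hpd hmeaspiece]
  have hpieces : ∀ g ∈ R.pi C,
      P (⋂ j ∈ R, Atm X j (T j) (ext g j))
        = ∏ j ∈ R, ∏ m ∈ T j, P {ω | X j m ω = if m ∈ ext g j then 1 else 0} :=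
    fun g _ => meas_inter_atoms hindep R T (ext g)
  rw [Finset.sum_congr rfl hpieces,
    Finset.prod_sum R C (fun j U => ∏ m ∈ T j, P {ω | X j m ω = if m ∈ U then 1 else 0})]
  refine Finset.sum_congr rfl fun g _ => ?_
  rw [← Finset.prod_attach R
    (fun j => ∏ m ∈ T j, P {ω | X j m ω = if m ∈ ext g j then 1 else 0})]
  refine Finset.prod_congr rfl fun x _ => ?_
  congr 1
  simp only [hext, dif_pos x.2]

end Stmt13Aux

open Stmt13Aux Finset

/-- for iid Bernoulli(p) coordinates, for all `k, n ≥ 1`,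
`p_{k,n}^{(p)} = Σ_{i=0}^{k} C(k,i) pⁱ (1-p)^{k-i} (1 - pⁱ)^{n-1}`. -/
theorem stmt_13 {Ω : Type*} [MeasurableSpace Ω] (P : Measure Ω) [IsProbabilityMeasure P]
    (p : ℝ) (hp : p ∈ Set.Ioo (0 : ℝ) 1)
    (X : ℕ → ℕ → Ω → ℝ)
    (hmeas : ∀ i j, Measurable (X i j))
    (hindep : iIndepFun (fun q : ℕ × ℕ => X q.1 q.2) P)
    (hval : ∀ i j ω, X i j ω = 0 ∨ X i j ω = 1)
    (hp1 : ∀ i j, P {ω | X i j ω = 1} = ENNReal.ofReal p)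
    (k n : ℕ) (hk : 1 ≤ k) (hn : 1 ≤ n) :
    (P {ω | IsParetoMax X k n 0 ω}).toReal
      = ∑ i ∈ Finset.range (k + 1),
          (k.choose i : ℝ) * p ^ i * (1 - p) ^ (k - i) * (1 - p ^ i) ^ (n - 1) := by
  classical
  obtain ⟨n', rfl⟩ : ∃ n', n = n' + 1 := ⟨n - 1, (Nat.succ_pred_eq_of_pos hn).symm⟩
  obtain ⟨hp0, hplt⟩ := hp
  have hpnn : (0:ℝ) ≤ p := hp0.le
  have h1p : (0:ℝ) ≤ 1 - p := by linarith
  set a := ENNReal.ofReal p with ha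
  set b := ENNReal.ofReal (1 - p) with hb
  have hab : a + b = 1 := by
    rw [ha, hb, ← ENNReal.ofReal_add hpnn h1p]
    norm_num
  have hBzero : ∀ j m, {ω | X j m ω = (0:ℝ)} = {ω | X j m ω = 1}ᶜ := by
    intro j m; ext ω
    simp only [Set.mem_compl_iff, Set.mem_setOf_eq]
    constructor
    · intro h0 h1; rw [h0] at h1; norm_num at h1
    · intro h1; rcases hval j m ω with h | h
      · exact h
      · exact absurd h h1
  have hmeas1 : ∀ j m, MeasurableSet {ω | X j m ω = (1:ℝ)} :=
    fun j m => (hmeas j m) (measurableSet_singleton 1)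
  have hP0 : ∀ j m, P {ω | X j m ω = (0:ℝ)} = b := by
    intro j m
    rw [hBzero, measure_compl (hmeas1 j m) (measure_ne_top _ _), measure_univ, hp1 j m,
      hb, ENNReal.ofReal_sub _ hpnn, ENNReal.ofReal_one]
  have hsingle : ∀ j m (U : Finset ℕ),
      P {ω | X j m ω = if m ∈ U then (1:ℝ) else 0} = if m ∈ U then a else b := by
    intro j m U
    by_cases hm : m ∈ U
    · simp only [hm, if_true]; exact hp1 j m
    · simp only [hm, if_false]; exact hP0 j m
  have hrowprod : ∀ (j : ℕ) (T U : Finset ℕ), U ⊆ T →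
      (∏ m ∈ T, P {ω | X j m ω = if m ∈ U then (1:ℝ) else 0})
        = a ^ U.card * b ^ (T.card - U.card) := by
    intro j T U hUT
    have h1 : (∏ m ∈ T \ U, P {ω | X j m ω = if m ∈ U then (1:ℝ) else 0})
        = b ^ (T.card - U.card) := by
      rw [Finset.prod_congr rfl fun m hm => by
        rw [hsingle, if_neg (Finset.mem_sdiff.1 hm).2]]
      rw [Finset.prod_const, Finset.card_sdiff_of_subset hUT]
    have h2 : (∏ m ∈ U, P {ω | X j m ω = if m ∈ U then (1:ℝ) else 0}) = a ^ U.card := by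
      rw [Finset.prod_congr rfl fun m hm => by rw [hsingle, if_pos hm]]
      rw [Finset.prod_const]
    rw [← Finset.prod_sdiff hUT, h1, h2, mul_comm]
  set T : Finset ℕ → ℕ → Finset ℕ := fun S j => if j = 0 then Finset.range k else S with hT
  set C : Finset ℕ → ℕ → Finset (Finset ℕ) :=
    fun S j => if j = 0 then {S} else S.powerset.erase S with hC'
  have hC : ∀ S ∈ (Finset.range k).powerset, ∀ j,
      C S j ⊆ (T S j).powerset := by
    intro S hS j
    by_cases hj : j = 0
    · simp only [hC', hT, hj, if_true]
      intro U hU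
      rw [Finset.mem_singleton] at hU
      subst hU
      exact hS
    · simp only [hC', hT, hj, if_false]
      exact Finset.erase_subset _ _
  have hdom : ∀ (ω : Ω) (j : ℕ),
      ((∀ m < k, X 0 m ω ≤ X j m ω) ↔ ∀ m ∈ pat X 0 (Finset.range k) ω, X j m ω = 1) := by
    intro ω j
    constructor
    · intro h m hm
      rw [pat, Finset.mem_filter, Finset.mem_range] at hm
      obtain ⟨hmk, h1⟩ := hm
      have hle := h m hmk
      rw [h1] at hle
      rcases hval j m ω with h0 | h1'
      · rw [h0] at hle; linarith
      · exact h1'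
    · intro h m hmk
      rcases hval 0 m ω with h0 | h1
      · rw [h0]
        rcases hval j m ω with h' | h' <;> rw [h'] <;> norm_num
      · rw [h1, h m (by rw [pat, Finset.mem_filter, Finset.mem_range]; exact ⟨hmk, h1⟩)]
  have hE : {ω | IsParetoMax X k (n' + 1) 0 ω}
      = ⋃ S ∈ (Finset.range k).powerset,
          ⋂ j ∈ Finset.range (n' + 1), ⋃ U ∈ C S j, Atm X j (T S j) U := by
    ext ω
    simp only [Set.mem_setOf_eq, Set.mem_iUnion, exists_prop]
    constructor
    · intro hpm
      refine ⟨pat X 0 (Finset.range k) ω, Finset.mem_powerset.2 (pat_subset _ _ _), ?_⟩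
      refine Set.mem_iInter₂.2 fun j hj => ?_
      rw [mem_G hval (hC _ (Finset.mem_powerset.2 (pat_subset _ _ _)) j)]
      by_cases hj0 : j = 0
      · subst hj0
        simp only [hC', hT, if_true]
        exact Finset.mem_singleton_self _
      · simp only [hC', hT, hj0, if_false]
        rw [Finset.mem_erase]
        constructor
        · intro heq
          have hne := hpm j (Finset.mem_range.1 hj) hj0
          apply hne
          rw [hdom ω j]
          intro m hm
          have hmem : m ∈ pat X j (pat X 0 (Finset.range k) ω) ω := by
            rw [heq]; exact hm
          rw [pat, Finset.mem_filter] at hmem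
          exact hmem.2
        · exact Finset.mem_powerset.2 (pat_subset _ _ _)
    · rintro ⟨S, hS, hW⟩ j hjn hj0
      have hj : j ∈ Finset.range (n' + 1) := Finset.mem_range.2 hjn
      have h0 : (0 : ℕ) ∈ Finset.range (n' + 1) := Finset.mem_range.2 (Nat.succ_pos n')
      have hpat0 : pat X 0 (Finset.range k) ω = S := by
        have hm0 := Set.mem_iInter₂.1 hW 0 h0
        rw [mem_G hval (hC S hS 0)] at hm0
        simp only [hC', hT, if_true] at hm0
        exact Finset.mem_singleton.1 hm0
      have hmj := Set.mem_iInter₂.1 hW j hj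
      rw [mem_G hval (hC S hS j)] at hmj
      simp only [hC', hT, hj0, if_false] at hmj
      rw [Finset.mem_erase] at hmj
      intro hdomm
      apply hmj.1
      rw [hdom ω j, hpat0] at hdomm
      rw [pat]
      exact Finset.filter_eq_self.2 hdomm
  have hmeasW : ∀ S ∈ (Finset.range k).powerset,
      MeasurableSet (⋂ j ∈ Finset.range (n' + 1), ⋃ U ∈ C S j, Atm X j (T S j) U) :=
    fun S _ => Finset.measurableSet_biInter _ fun j _ =>
      Finset.measurableSet_biUnion _ fun U _ => measurableSet_Atm hmeas j _ _
  have hdisjW : (↑((Finset.range k).powerset) : Set (Finset ℕ)).PairwiseDisjoint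
      (fun S => ⋂ j ∈ Finset.range (n' + 1), ⋃ U ∈ C S j, Atm X j (T S j) U) := by
    intro S hS S' hS' hne
    rw [Function.onFun, Set.disjoint_left]
    intro ω hω hω'
    apply hne
    have h0 : (0 : ℕ) ∈ Finset.range (n' + 1) := Finset.mem_range.2 (Nat.succ_pos n')
    have e1 : pat X 0 (Finset.range k) ω = S := by
      have hm0 := Set.mem_iInter₂.1 hω 0 h0
      rw [mem_G hval (hC S (Finset.mem_coe.1 hS) 0)] at hm0
      simp only [hC', hT, if_true] at hm0
      exact Finset.mem_singleton.1 hm0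
    have e2 : pat X 0 (Finset.range k) ω = S' := by
      have hm0 := Set.mem_iInter₂.1 hω' 0 h0
      rw [mem_G hval (hC S' (Finset.mem_coe.1 hS') 0)] at hm0
      simp only [hC', hT, if_true] at hm0
      exact Finset.mem_singleton.1 hm0
    rw [← e1, ← e2]
  have hPE : P {ω | IsParetoMax X k (n' + 1) 0 ω}
      = ∑ S ∈ (Finset.range k).powerset,
          ∏ j ∈ Finset.range (n' + 1), ∑ U ∈ C S j, ∏ m ∈ T S j,
            P {ω | X j m ω = if m ∈ U then (1:ℝ) else 0} := by
    rw [hE, measure_biUnion_finset hdisjW hmeasW]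
    exact Finset.sum_congr rfl fun S hS =>
      meas_rows hval hmeas hindep _ _ _ (fun j _ => hC S hS j)
  have hane : ∀ i : ℕ, a ^ i ≠ ⊤ := fun i => ENNReal.pow_ne_top ENNReal.ofReal_ne_top
  have hrowsum : ∀ (j : ℕ) (S : Finset ℕ),
      (∑ U ∈ S.powerset.erase S, ∏ m ∈ S, P {ω | X j m ω = if m ∈ U then (1:ℝ) else 0})
        = 1 - a ^ S.card := by
    intro j S
    have hall : (∑ U ∈ S.powerset, a ^ U.card * b ^ (S.card - U.card)) = 1 := by
      calc (∑ U ∈ S.powerset, a ^ U.card * b ^ (S.card - U.card))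
          = ∑ U ∈ S.powerset, (∏ _i ∈ U, a) * ∏ _i ∈ S \ U, b :=
            Finset.sum_congr rfl fun U hU => by
              rw [Finset.prod_const, Finset.prod_const,
                Finset.card_sdiff_of_subset (Finset.mem_powerset.1 hU)]
        _ = ∏ _i ∈ S, (a + b) := (Finset.prod_add _ _ _).symm
        _ = 1 := by rw [hab, Finset.prod_const, one_pow]
    have hsplit := Finset.add_sum_erase S.powerset
      (fun U => a ^ U.card * b ^ (S.card - U.card)) (Finset.mem_powerset_self S)
    rw [hall] at hsplit
    simp only [Nat.sub_self, pow_zero, mul_one] at hsplit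
    have hsum : (∑ U ∈ S.powerset.erase S, a ^ U.card * b ^ (S.card - U.card))
        = 1 - a ^ S.card := by
      refine ENNReal.eq_sub_of_add_eq (hane _) ?_
      rw [add_comm]
      exact hsplit
    rw [← hsum]
    refine Finset.sum_congr rfl fun U hU => ?_
    exact hrowprod j S U (Finset.mem_powerset.1 (Finset.mem_of_mem_erase hU))
  have hprodval : ∀ S ∈ (Finset.range k).powerset,
      (∏ j ∈ Finset.range (n' + 1), ∑ U ∈ C S j, ∏ m ∈ T S j,
          P {ω | X j m ω = if m ∈ U then (1:ℝ) else 0})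
        = (1 - a ^ S.card) ^ n' * (a ^ S.card * b ^ (k - S.card)) := by
    intro S hS
    rw [Finset.prod_range_succ']
    have hf0 : (∑ U ∈ C S 0, ∏ m ∈ T S 0,
        P {ω | X 0 m ω = if m ∈ U then (1:ℝ) else 0})
          = a ^ S.card * b ^ (k - S.card) := by
      simp only [hC', hT, if_true, Finset.sum_singleton]
      rw [hrowprod 0 _ _ (Finset.mem_powerset.1 hS), Finset.card_range]
    have hfs : ∀ i ∈ Finset.range n', (∑ U ∈ C S (i + 1), ∏ m ∈ T S (i + 1),
        P {ω | X (i + 1) m ω = if m ∈ U then (1:ℝ) else 0}) = 1 - a ^ S.card := by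
      intro i _
      simp only [hC', hT, Nat.succ_ne_zero, if_false]
      exact hrowsum (i + 1) S
    rw [Finset.prod_congr rfl hfs, Finset.prod_const, Finset.card_range, hf0]
  have hgroup : (∑ S ∈ (Finset.range k).powerset,
        (1 - a ^ S.card) ^ n' * (a ^ S.card * b ^ (k - S.card)))
      = ∑ i ∈ Finset.range (k + 1),
          (k.choose i : ℝ≥0∞) * ((1 - a ^ i) ^ n' * (a ^ i * b ^ (k - i))) := by
    have hps : (Finset.range k).powerset
        = (Finset.range (k + 1)).biUnion fun i => Finset.powersetCard i (Finset.range k) := by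
      conv_lhs => rw [Finset.powerset_card_biUnion]
      rw [Finset.card_range]
    have hdisjc : (↑(Finset.range (k + 1)) : Set ℕ).PairwiseDisjoint
        (fun i => Finset.powersetCard i (Finset.range k)) := by
      intro i _ i' _ hne
      rw [Function.onFun, Finset.disjoint_left]
      intro S hS hS'
      exact hne (((Finset.mem_powersetCard.1 hS).2).symm.trans (Finset.mem_powersetCard.1 hS').2)
    rw [hps, Finset.sum_biUnion hdisjc]
    refine Finset.sum_congr rfl fun i _ => ?_
    rw [Finset.sum_congr rfl (fun S hS => by rw [(Finset.mem_powersetCard.1 hS).2]),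
      Finset.sum_const, Finset.card_powersetCard, Finset.card_range, nsmul_eq_mul]
  have h1a : ∀ i : ℕ, (1 : ℝ≥0∞) - a ^ i = ENNReal.ofReal (1 - p ^ i) := by
    intro i
    rw [ha, ← ENNReal.ofReal_pow hpnn, ENNReal.ofReal_sub _ (pow_nonneg hpnn i),
      ENNReal.ofReal_one]
  have hterm : ∀ i : ℕ, (k.choose i : ℝ≥0∞) * ((1 - a ^ i) ^ n' * (a ^ i * b ^ (k - i)))
      = ENNReal.ofReal ((k.choose i : ℝ) * ((1 - p ^ i) ^ n' * (p ^ i * (1 - p) ^ (k - i)))) := by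
    intro i
    have hp1i : (0:ℝ) ≤ 1 - p ^ i := by
      have := pow_le_one₀ hpnn hplt.le (n := i)
      linarith
    rw [h1a, ha, hb, ← ENNReal.ofReal_pow hp1i, ← ENNReal.ofReal_pow hpnn,
      ← ENNReal.ofReal_pow h1p, ← ENNReal.ofReal_mul (pow_nonneg hpnn i),
      ← ENNReal.ofReal_mul (pow_nonneg hp1i n'),
      ← ENNReal.ofReal_natCast (k.choose i),
      ← ENNReal.ofReal_mul (Nat.cast_nonneg _)]
  rw [hPE, Finset.sum_congr rfl hprodval, hgroup, Finset.sum_congr rfl fun i _ => hterm i,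
    ENNReal.toReal_sum (fun i _ => ENNReal.ofReal_ne_top)]
  refine Finset.sum_congr rfl fun i hi => ?_
  have hp1i : (0:ℝ) ≤ 1 - p ^ i := by
    have := pow_le_one₀ hpnn hplt.le (n := i)
    linarith
  rw [ENNReal.toReal_ofReal (by positivity)]
  simp only [Nat.add_sub_cancel]
  ring
end

section
/- Let the coordinates be i.i.d. Bernoulli(p) random variables for some p ∈ (0,1) and let k ≥ 1 be fixed. Then p_{k,n}^{(p)} ~ p^k (1 − p^k)^{n−1} as n → ∞, i.e. the ratio p_{k,n}^{(p)} / [p^k (1 − p^k)^{n−1}] converges to 1 as n → ∞. -/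
open MeasureTheory ProbabilityTheory Filter

section Aux

variable {Ω : Type*} (X : ℕ → ℕ → Ω → ℝ)

/-- The event that `X i m = 1`. -/
def oneE (i m : ℕ) : Set Ω := {ω | X i m ω = 1}

/-- The event that row 0 has pattern of ones exactly `T` (among coordinates `< k`). -/
def AE (k : ℕ) (T : Finset ℕ) : Set Ω :=
  ⋂ m ∈ Finset.range k, if m ∈ T then oneE X 0 m else (oneE X 0 m)ᶜ

/-- The event that row `j` has ones on all of `T`. -/
def CE (T : Finset ℕ) (j : ℕ) : Set Ω := ⋂ m ∈ T, oneE X j m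

/-- Row 0 has pattern `T` and no row `j ∈ [1, n)` dominates it. -/
def FE (k : ℕ) (T : Finset ℕ) (n : ℕ) : Set Ω :=
  AE X k T ∩ ⋂ j ∈ Finset.Ico 1 n, (CE X T j)ᶜ

lemma mem_AE {k : ℕ} {T : Finset ℕ} {ω : Ω} :
    ω ∈ AE X k T ↔ ∀ m < k, (m ∈ T ↔ X 0 m ω = 1) := by
  simp only [AE, Set.mem_iInter, Finset.mem_range]
  refine forall_congr' fun m => forall_congr' fun _ => ?_
  by_cases h : m ∈ T <;> simp [h, oneE]

lemma mem_CE {T : Finset ℕ} {j : ℕ} {ω : Ω} :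
    ω ∈ CE X T j ↔ ∀ m ∈ T, X j m ω = 1 := by
  simp [CE, oneE]

end Aux

/-- for iid Bernoulli(p) coordinates and fixed `k ≥ 1`,
`p_{k,n}^{(p)} / [p^k (1 - p^k)^{n-1}] → 1` as `n → ∞`. -/
theorem stmt_14 {Ω : Type*} [MeasurableSpace Ω] (P : Measure Ω) [IsProbabilityMeasure P]
    (p : ℝ) (hp : p ∈ Set.Ioo (0 : ℝ) 1)
    (X : ℕ → ℕ → Ω → ℝ)
    (hmeas : ∀ i j, Measurable (X i j))
    (hindep : iIndepFun (fun q : ℕ × ℕ => X q.1 q.2) P)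
    (hval : ∀ i j ω, X i j ω = 0 ∨ X i j ω = 1)
    (hp1 : ∀ i j, P {ω | X i j ω = 1} = ENNReal.ofReal p)
    (k : ℕ) (hk : 1 ≤ k) :
    Filter.Tendsto
      (fun n : ℕ =>
        (P {ω | IsParetoMax X k n 0 ω}).toReal / (p ^ k * (1 - p ^ k) ^ (n - 1)))
      Filter.atTop (nhds 1) := by
  obtain ⟨hp0, hplt⟩ := hp
  have hp0' : (0:ℝ) ≤ p := hp0.le
  have h1p : (0:ℝ) < 1 - p := by linarith
  -- basic measurability and probabilities of single-coordinate events
  have hone_meas : ∀ i m, MeasurableSet (oneE X i m) := fun i m =>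
    (hmeas i m) (measurableSet_singleton 1)
  have hone_m : ∀ i m,
      MeasurableSet[MeasurableSpace.comap (X i m) inferInstance] (oneE X i m) :=
    fun i m => ⟨{1}, measurableSet_singleton 1, rfl⟩
  have hone_prob : ∀ i m, P (oneE X i m) = ENNReal.ofReal p := hp1
  have honec_prob : ∀ i m, P ((oneE X i m)ᶜ) = ENNReal.ofReal (1 - p) := by
    intro i m
    rw [measure_compl (hone_meas i m) (measure_ne_top P _), hone_prob i m,
      ENNReal.ofReal_sub _ hp0', ENNReal.ofReal_one, measure_univ]
  -- probability of AE
  have hA_prob : ∀ T ∈ (Finset.range k).powerset,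
      P (AE X k T) = ENNReal.ofReal (p ^ T.card * (1 - p) ^ (k - T.card)) := by
    intro T hT
    rw [Finset.mem_powerset] at hT
    have hAeq : AE X k T = ⋂ q ∈ ({0} ×ˢ Finset.range k),
        (if q.2 ∈ T then oneE X q.1 q.2 else (oneE X q.1 q.2)ᶜ) := by
      ext ω
      simp only [AE, Set.mem_iInter, Finset.mem_product, Finset.mem_singleton, Finset.mem_range]
      constructor
      · rintro h ⟨a, b⟩ ⟨rfl, hb⟩; exact h b hb
      · intro h m hm; exact h (0, m) ⟨rfl, hm⟩
    rw [hAeq, hindep.meas_biInter]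
    · rw [Finset.prod_product, Finset.prod_singleton]
      have : ∀ m, P (if m ∈ T then oneE X 0 m else (oneE X 0 m)ᶜ)
          = if m ∈ T then ENNReal.ofReal p else ENNReal.ofReal (1 - p) := by
        intro m; by_cases h : m ∈ T <;> simp [h, hone_prob 0 m, honec_prob 0 m]
      simp_rw [this]
      rw [Finset.prod_ite, Finset.prod_const, Finset.prod_const,
        Finset.filter_mem_eq_inter, Finset.inter_eq_right.mpr hT,
        Finset.filter_not, Finset.filter_mem_eq_inter, Finset.inter_eq_right.mpr hT,
        Finset.card_sdiff_of_subset hT, Finset.card_range,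
        ENNReal.ofReal_mul (by positivity), ENNReal.ofReal_pow hp0',
        ENNReal.ofReal_pow h1p.le]
    · rintro ⟨a, b⟩ hq
      by_cases h : b ∈ T <;> simp only [h, if_true, if_false]
      · exact hone_m a b
      · exact (hone_m a b).compl
  -- probability of CE
  have hC_prob : ∀ (T : Finset ℕ) (j : ℕ), P (CE X T j) = ENNReal.ofReal (p ^ T.card) := by
    intro T j
    have hCeq : CE X T j = ⋂ q ∈ ({j} ×ˢ T), oneE X q.1 q.2 := by
      ext ω
      simp only [CE, Set.mem_iInter, Finset.mem_product, Finset.mem_singleton]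
      constructor
      · rintro h ⟨a, b⟩ ⟨rfl, hb⟩; exact h b hb
      · intro h m hm; exact h (j, m) ⟨rfl, hm⟩
    rw [hCeq, hindep.meas_biInter]
    · rw [Finset.prod_product, Finset.prod_singleton]
      simp_rw [hone_prob j]
      rw [Finset.prod_const, ENNReal.ofReal_pow hp0']
    · rintro ⟨a, b⟩ hq; exact hone_m a b
  have hC_meas : ∀ (T : Finset ℕ) (j : ℕ), MeasurableSet (CE X T j) := fun T j =>
    MeasurableSet.biInter T.countable_toSet fun m _ => hone_meas j m
  have hCc_prob : ∀ (T : Finset ℕ) (j : ℕ),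
      P ((CE X T j)ᶜ) = ENNReal.ofReal (1 - p ^ T.card) := by
    intro T j
    have hle1 : p ^ T.card ≤ 1 := pow_le_one₀ hp0' hplt.le
    rw [measure_compl (hC_meas T j) (measure_ne_top P _), hC_prob,
      ENNReal.ofReal_sub _ (by positivity), ENNReal.ofReal_one, measure_univ]
  -- key probability of FE via independence induction
  have hF_prob : ∀ T ∈ (Finset.range k).powerset, ∀ n, 1 ≤ n →
      P (FE X k T n) = ENNReal.ofReal (p ^ T.card * (1 - p) ^ (k - T.card))
        * ENNReal.ofReal (1 - p ^ T.card) ^ (n - 1) := by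
    intro T hT n hn
    induction n, hn using Nat.le_induction with
    | base =>
      have : FE X k T 1 = AE X k T := by
        unfold FE
        simp [Finset.Ico_self]
      rw [this, hA_prob T hT]; simp
    | succ n hn ih =>
      have hstep : FE X k T (n + 1) = FE X k T n ∩ (CE X T n)ᶜ := by
        unfold FE
        rw [Nat.Ico_succ_right_eq_insert_Ico hn, Finset.set_biInter_insert]
        rw [Set.inter_comm ((CE X T n)ᶜ), ← Set.inter_assoc]
      -- independence of events over rows < n and row n
      set m' : ℕ × ℕ → MeasurableSpace Ω :=
        fun q => MeasurableSpace.comap (X q.1 q.2) inferInstance with hm'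
      have hle : ∀ q, m' q ≤ ‹MeasurableSpace Ω› := fun q => (hmeas q.1 q.2).comap_le
      have hdisj : Disjoint {q : ℕ × ℕ | q.1 < n} {q : ℕ × ℕ | q.1 = n} := by
        rw [Set.disjoint_left]
        rintro ⟨a, b⟩ h1 h2
        simp only [Set.mem_setOf_eq] at h1 h2
        omega
      have hInd := indep_iSup_of_disjoint hle hindep.iIndep hdisj
      rw [Indep_iff] at hInd
      have hmem1 : ∀ i mm, i < n →
          MeasurableSet[⨆ q ∈ {q : ℕ × ℕ | q.1 < n}, m' q] (oneE X i mm) := by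
        intro i mm hi
        exact le_iSup₂ (f := fun (q : ℕ × ℕ) (_ : q ∈ {q : ℕ × ℕ | q.1 < n}) => m' q)
          (i, mm) hi _ (hone_m i mm)
      have hmem2 : ∀ mm,
          MeasurableSet[⨆ q ∈ {q : ℕ × ℕ | q.1 = n}, m' q] (oneE X n mm) := by
        intro mm
        exact le_iSup₂ (f := fun (q : ℕ × ℕ) (_ : q ∈ {q : ℕ × ℕ | q.1 = n}) => m' q)
          (n, mm) rfl _ (hone_m n mm)
      have hFmeas1 : MeasurableSet[⨆ q ∈ {q : ℕ × ℕ | q.1 < n}, m' q] (FE X k T n) := by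
        refine MeasurableSet.inter ?_ ?_
        · refine MeasurableSet.biInter (Finset.range k).countable_toSet fun m hm => ?_
          by_cases h : m ∈ T <;> simp only [h, if_true, if_false]
          · exact hmem1 0 m (by omega)
          · exact (hmem1 0 m (by omega)).compl
        · refine MeasurableSet.biInter (Finset.Ico 1 n).countable_toSet fun j hj => ?_
          refine (MeasurableSet.biInter T.countable_toSet fun m hm => ?_).compl
          exact hmem1 j m (Finset.mem_Ico.mp hj).2
      have hCmeas2 : MeasurableSet[⨆ q ∈ {q : ℕ × ℕ | q.1 = n}, m' q] ((CE X T n)ᶜ) :=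
        (MeasurableSet.biInter T.countable_toSet fun m _ => hmem2 m).compl
      have := hInd (FE X k T n) ((CE X T n)ᶜ) hFmeas1 hCmeas2
      rw [hstep, this, ih, hCc_prob T n]
      have : n + 1 - 1 = (n - 1) + 1 := by omega
      rw [this, pow_succ, mul_assoc]
  -- decomposition of the Pareto-max event
  have hval01 : ∀ i m ω, X i m ω = 1 ↔ ¬ X i m ω = 0 := by
    intro i m ω; rcases hval i m ω with h | h <;> simp [h]
  have hE : ∀ n, 1 ≤ n → {ω | IsParetoMax X k n 0 ω}
      = ⋃ T ∈ (Finset.range k).powerset, FE X k T n := by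
    intro n hn
    ext ω
    simp only [Set.mem_iUnion, Set.mem_setOf_eq, exists_prop]
    constructor
    · intro h
      refine ⟨(Finset.range k).filter (fun m => X 0 m ω = 1),
        Finset.mem_powerset.mpr (Finset.filter_subset _ _), ?_, ?_⟩
      · rw [mem_AE]
        intro m hm
        simp [Finset.mem_filter, Finset.mem_range, hm]
      · simp only [Set.mem_iInter]
        intro j hj
        rw [Finset.mem_Ico] at hj
        have hdom := h j hj.2 (by omega)
        push_neg at hdom
        obtain ⟨m, hmk, hlt⟩ := hdom
        intro hC
        rw [mem_CE] at hC
        have hX0 : X 0 m ω = 1 := by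
          rcases hval 0 m ω with h0 | h0
          · rcases hval j m ω with h1 | h1 <;> rw [h0, h1] at hlt <;> linarith
          · exact h0
        have hmT : m ∈ (Finset.range k).filter (fun m => X 0 m ω = 1) := by
          simp [Finset.mem_filter, Finset.mem_range, hmk, hX0]
        have := hC m hmT
        rw [this, hX0] at hlt; linarith
    · rintro ⟨T, hT, hωA, hωC⟩
      rw [Finset.mem_powerset] at hT
      intro j hjn hj0 hdom
      have hjIco : j ∈ Finset.Ico 1 n := Finset.mem_Ico.mpr ⟨by omega, hjn⟩
      simp only [Set.mem_iInter] at hωC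
      refine hωC j hjIco ?_
      rw [mem_CE]
      intro m hmT
      have hmk : m < k := Finset.mem_range.mp (hT hmT)
      have hX0 : X 0 m ω = 1 := ((mem_AE X).mp hωA m hmk).mp hmT
      have := hdom m hmk
      rcases hval j m ω with h1 | h1
      · rw [hX0, h1] at this; linarith
      · exact h1
  -- pairwise disjointness of the FE's
  have hFdisj : ∀ n, (↑(Finset.range k).powerset : Set (Finset ℕ)).PairwiseDisjoint
      (fun T => FE X k T n) := by
    intro n T hT T' hT' hne
    rw [Finset.mem_coe, Finset.mem_powerset] at hT hT'
    rw [Function.onFun, Set.disjoint_left]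
    intro ω hω hω'
    refine hne ?_
    have h1 := (mem_AE X).mp hω.1
    have h2 := (mem_AE X).mp hω'.1
    ext m
    by_cases hm : m < k
    · rw [h1 m hm, h2 m hm]
    · constructor <;> intro h
      · exact absurd (Finset.mem_range.mp (hT h)) hm
      · exact absurd (Finset.mem_range.mp (hT' h)) hm
  have hFmeas : ∀ (T : Finset ℕ) (n : ℕ), MeasurableSet (FE X k T n) := by
    intro T n
    refine MeasurableSet.inter ?_ ?_
    · refine MeasurableSet.biInter (Finset.range k).countable_toSet fun m hm => ?_
      by_cases h : m ∈ T <;> simp only [h, if_true, if_false]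
      · exact hone_meas 0 m
      · exact (hone_meas 0 m).compl
    · exact MeasurableSet.biInter (Finset.Ico 1 n).countable_toSet
        fun j _ => (hC_meas T j).compl
  -- the explicit formula for the probability, in real numbers
  set w : Finset ℕ → ℕ → ℝ :=
    fun T n => p ^ T.card * (1 - p) ^ (k - T.card) * (1 - p ^ T.card) ^ (n - 1) with hw
  have hwnn : ∀ T n, 0 ≤ w T n := by
    intro T n
    have : (0:ℝ) ≤ 1 - p ^ T.card := by
      have := pow_le_one₀ hp0' hplt.le (n := T.card); linarith
    positivity
  have hPE : ∀ n, 1 ≤ n → (P {ω | IsParetoMax X k n 0 ω}).toReal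
      = ∑ T ∈ (Finset.range k).powerset, w T n := by
    intro n hn
    rw [hE n hn, measure_biUnion_finset (hFdisj n) (fun T _ => hFmeas T n)]
    rw [ENNReal.toReal_sum (fun T _ => measure_ne_top P _)]
    refine Finset.sum_congr rfl fun T hT => ?_
    rw [hF_prob T hT n hn]
    have hle1 : p ^ T.card ≤ 1 := pow_le_one₀ hp0' hplt.le
    rw [← ENNReal.ofReal_pow (by linarith), ← ENNReal.ofReal_mul (by positivity),
      ENNReal.toReal_ofReal (hwnn T n), hw]
  -- the limit
  have hpk0 : (0:ℝ) < p ^ k := by positivity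
  have hpk1 : p ^ k < 1 := pow_lt_one₀ hp0' hplt (by omega : k ≠ 0)
  have h1pk : (0:ℝ) < 1 - p ^ k := by linarith
  set c : Finset ℕ → ℝ := fun T => p ^ T.card * (1 - p) ^ (k - T.card) / p ^ k with hc
  set r : Finset ℕ → ℝ := fun T => (1 - p ^ T.card) / (1 - p ^ k) with hr
  have hterm : ∀ T n, 1 ≤ n →
      w T n / (p ^ k * (1 - p ^ k) ^ (n - 1)) = c T * r T ^ (n - 1) := by
    intro T n hn
    rw [hw, hc, hr, div_pow, mul_div_mul_comm]
  have hlim : ∀ T ∈ (Finset.range k).powerset,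
      Tendsto (fun n : ℕ => c T * r T ^ (n - 1)) atTop
        (nhds (if T = Finset.range k then 1 else 0)) := by
    intro T hT
    rw [Finset.mem_powerset] at hT
    by_cases hTk : T = Finset.range k
    · subst hTk
      simp only [if_true]
      have hcT : c (Finset.range k) = 1 := by
        rw [hc]; simp [Finset.card_range, div_self hpk0.ne']
      have hrT : r (Finset.range k) = 1 := by
        rw [hr]; simp [Finset.card_range, div_self h1pk.ne']
      simp [hcT, hrT]
    · simp only [hTk, if_false]
      have hcard : T.card < k := by
        have hle : T.card ≤ k := by
          simpa [Finset.card_range] using Finset.card_le_card hT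
        rcases lt_or_eq_of_le hle with h | h
        · exact h
        · exact absurd (Finset.eq_of_subset_of_card_le hT (by rw [Finset.card_range]; omega)) hTk
      have hrlt : r T < 1 := by
        rw [hr, div_lt_one h1pk]
        have : p ^ k < p ^ T.card := pow_lt_pow_right_of_lt_one₀ hp0 hplt hcard
        linarith
      have hrnn : 0 ≤ r T := by
        rw [hr]
        have := pow_le_one₀ hp0' hplt.le (n := T.card)
        exact div_nonneg (by linarith) h1pk.le
      have h0 : Tendsto (fun n : ℕ => r T ^ n) atTop (nhds 0) :=
        tendsto_pow_atTop_nhds_zero_of_lt_one hrnn hrlt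
      have h1 : Tendsto (fun n : ℕ => r T ^ (n - 1)) atTop (nhds 0) :=
        h0.comp (tendsto_sub_atTop_nat 1)
      simpa using h1.const_mul (c T)
  have hsum : Tendsto (fun n : ℕ => ∑ T ∈ (Finset.range k).powerset, c T * r T ^ (n - 1))
      atTop (nhds 1) := by
    have := tendsto_finset_sum ((Finset.range k).powerset) hlim
    have hsum1 : (∑ T ∈ (Finset.range k).powerset,
        if T = Finset.range k then (1:ℝ) else 0) = 1 := by
      rw [Finset.sum_ite_eq' (Finset.range k).powerset (Finset.range k) (fun _ => (1:ℝ))]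
      simp [Finset.mem_powerset_self]
    rwa [hsum1] at this
  refine hsum.congr' ?_
  filter_upwards [eventually_ge_atTop 1] with n hn
  rw [← Finset.sum_congr rfl (fun T (_ : T ∈ (Finset.range k).powerset) => hterm T n hn)]
  rw [hPE n hn, Finset.sum_div]
end

section
/- Let the coordinates X_{ij} be i.i.d. Bernoulli(p) random variables for some p ∈ (0,1). Then for all integers k ≥ 1 and n ≥ 1, the probability that the first vector is a weak maximum is given exactly by q_{k,n}^{(p)} = Σ_{i=0}^{k} C(k,i) p^i (1−p)^{k−i} (1 − p^i + p^i (1−p)^{k−i})^{n−1}. -/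
open MeasureTheory ProbabilityTheory Filter

/-- `X i` is a weak maximum, with respect to the coordinatewise product order, among
the sample `X 0, …, X (n-1)` of vectors of dimension `k`: no other vector of the sample
strictly dominates it (dominates weakly in all coordinates and strictly in at least one). -/
def IsWeakParetoMax {Ω : Type*} (X : ℕ → ℕ → Ω → ℝ) (k n i : ℕ) (ω : Ω) : Prop :=
  ∀ j < n, j ≠ i →
    ¬ ((∀ m < k, X i m ω ≤ X j m ω) ∧ (∃ m < k, X i m ω < X j m ω))

section Aux
open Finset


lemma aux_prod_ite_subset (p c : ℝ) {t A : Finset ℕ} (h : t ⊆ A) :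
    (∏ m ∈ A, (if m ∈ t then p else c)) = p ^ t.card * c ^ (A.card - t.card) := by
  rw [← Finset.prod_sdiff h]
  rw [Finset.prod_ite_of_false (by intro x hx; exact (Finset.mem_sdiff.mp hx).2),
    Finset.prod_ite_of_true (by intro x hx; exact hx)]
  rw [Finset.prod_const, Finset.prod_const, Finset.card_sdiff_of_subset h, mul_comm]

lemma aux_row_total (p c : ℝ) (A : Finset ℕ) :
    ∑ t ∈ A.powerset, p ^ t.card * c ^ (A.card - t.card) = (p + c) ^ A.card := by
  rw [← Finset.prod_const, Finset.prod_add]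
  refine Finset.sum_congr rfl fun t ht => ?_
  rw [Finset.mem_powerset] at ht
  rw [Finset.prod_const, Finset.prod_const, Finset.card_sdiff_of_subset ht]

lemma aux_dom_sum (p c : ℝ) {s A : Finset ℕ} (hs : s ⊆ A) :
    ∑ t ∈ A.powerset.filter (fun t => s ⊆ t), p ^ t.card * c ^ (A.card - t.card)
      = p ^ s.card * (p + c) ^ (A.card - s.card) := by
  have key : ∑ t ∈ A.powerset.filter (fun t => s ⊆ t), p ^ t.card * c ^ (A.card - t.card)
      = ∑ u ∈ (A \ s).powerset, p ^ s.card * (p ^ u.card * c ^ ((A \ s).card - u.card)) := by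
    refine Finset.sum_nbij' (fun t => t \ s) (fun u => s ∪ u) ?_ ?_ ?_ ?_ ?_
    · intro t ht
      rw [Finset.mem_filter, Finset.mem_powerset] at ht
      rw [Finset.mem_powerset]
      exact Finset.sdiff_subset_sdiff ht.1 le_rfl
    · intro u hu
      rw [Finset.mem_powerset] at hu
      rw [Finset.mem_filter, Finset.mem_powerset]
      refine ⟨Finset.union_subset hs (hu.trans Finset.sdiff_subset), Finset.subset_union_left⟩
    · intro t ht
      rw [Finset.mem_filter] at ht
      exact Finset.union_sdiff_of_subset ht.2
    · intro u hu
      rw [Finset.mem_powerset] at hu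
      show (s ∪ u) \ s = u
      exact Finset.union_sdiff_cancel_left
        (Finset.disjoint_left.mpr fun a ha h2 => (Finset.mem_sdiff.mp (hu h2)).2 ha)
    · intro t ht
      rw [Finset.mem_filter, Finset.mem_powerset] at ht
      have h1 : t.card ≤ A.card := Finset.card_le_card ht.1
      have h2 : s.card ≤ t.card := Finset.card_le_card ht.2
      have e1 : t.card = s.card + (t \ s).card := by
        rw [Finset.card_sdiff_of_subset ht.2]; omega
      have e2 : (A \ s).card - (t \ s).card = A.card - t.card := by
        rw [Finset.card_sdiff_of_subset ht.2, Finset.card_sdiff_of_subset hs]; omega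
      rw [e2, ← mul_assoc, ← pow_add, ← e1]
  rw [key, ← Finset.mul_sum, aux_row_total, Finset.card_sdiff_of_subset hs]

lemma aux_nodom_sum (p c : ℝ) {s A : Finset ℕ} (hs : s ⊆ A) :
    ∑ t ∈ A.powerset, (if ¬ s ⊂ t then p ^ t.card * c ^ (A.card - t.card) else 0)
      = (p + c) ^ A.card - p ^ s.card * (p + c) ^ (A.card - s.card)
          + p ^ s.card * c ^ (A.card - s.card) := by
  classical
  have hfe : A.powerset.filter (fun t => s ⊂ t)
      = (A.powerset.filter (fun t => s ⊆ t)).erase s := by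
    ext t
    simp only [Finset.mem_erase, Finset.mem_filter, Finset.ssubset_iff_subset_ne]
    constructor
    · rintro ⟨h1, h2, h3⟩; exact ⟨fun h => h3 h.symm, h1, h2⟩
    · rintro ⟨h1, h2, h3⟩; exact ⟨h2, h3, fun h => h1 h.symm⟩
  have hmem : s ∈ A.powerset.filter (fun t => s ⊆ t) := by
    simp [Finset.mem_powerset, hs]
  have hdom : ∑ t ∈ A.powerset.filter (fun t => s ⊂ t), p ^ t.card * c ^ (A.card - t.card)
      = p ^ s.card * (p + c) ^ (A.card - s.card) - p ^ s.card * c ^ (A.card - s.card) := by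
    rw [hfe, Finset.sum_erase_eq_sub hmem, aux_dom_sum p c hs]
  have hsplit := Finset.sum_filter_add_sum_filter_not A.powerset (fun t => s ⊂ t)
    (fun t => p ^ t.card * c ^ (A.card - t.card))
  rw [aux_row_total p c A] at hsplit
  rw [← Finset.sum_filter]
  rw [hdom] at hsplit
  linarith

lemma aux_key (p : ℝ) (k n : ℕ) :
    ∑ s ∈ (Finset.range k).powerset,
        (p ^ s.card * (1-p) ^ (k - s.card))
          * (1 - p ^ s.card + p ^ s.card * (1-p) ^ (k - s.card)) ^ (n-1)
      = ∑ i ∈ Finset.range (k+1),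
          (k.choose i : ℝ) * p ^ i * (1 - p) ^ (k - i)
            * (1 - p ^ i + p ^ i * (1 - p) ^ (k - i)) ^ (n - 1) := by
  have := Finset.sum_powerset_apply_card
    (fun i => (p ^ i * (1-p) ^ (k - i)) * (1 - p ^ i + p ^ i * (1-p) ^ (k - i)) ^ (n-1))
    (x := Finset.range k)
  rw [Finset.card_range] at this
  rw [this]
  refine Finset.sum_congr rfl fun i _ => ?_
  rw [nsmul_eq_mul]
  ring

/-- Pattern function: row `0` has pattern `s`, row `j+1` has pattern `z j`. -/
def patFn (n : ℕ) (s : Finset ℕ) (z : Fin (n-1) → Finset ℕ) (j : ℕ) : Finset ℕ :=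
  if h : 0 < j ∧ j - 1 < n - 1 then z ⟨j - 1, h.2⟩ else s

lemma patFn_zero (n : ℕ) (s : Finset ℕ) (z : Fin (n-1) → Finset ℕ) :
    patFn n s z 0 = s := by simp [patFn]

lemma patFn_succ (n : ℕ) (s : Finset ℕ) (z : Fin (n-1) → Finset ℕ) (j : ℕ) (h : j < n - 1) :
    patFn n s z (j+1) = z ⟨j, h⟩ := by
  rw [patFn, dif_pos ⟨Nat.succ_pos j, by omega⟩]
  congr 1

def cylSet {Ω : Type*} (X : ℕ → ℕ → Ω → ℝ) (k n : ℕ) (s : Finset ℕ)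
    (z : Fin (n-1) → Finset ℕ) : Set Ω :=
  ⋂ q ∈ Finset.range n ×ˢ Finset.range k,
    {ω | X q.1 q.2 ω = if q.2 ∈ patFn n s z q.1 then 1 else 0}

lemma mem_cylSet {Ω : Type*} {X : ℕ → ℕ → Ω → ℝ} {k n : ℕ} {s : Finset ℕ}
    {z : Fin (n-1) → Finset ℕ} {ω : Ω} :
    ω ∈ cylSet X k n s z ↔
      ∀ j < n, ∀ m < k, X j m ω = if m ∈ patFn n s z j then 1 else 0 := by
  simp only [cylSet, Set.mem_iInter, Set.mem_setOf_eq, Finset.mem_product, Finset.mem_range]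
  constructor
  · intro h j hj m hm; exact h (j, m) ⟨hj, hm⟩
  · intro h q hq; exact h q.1 hq.1 q.2 hq.2

def GoodPat (n : ℕ) (s : Finset ℕ) (z : Fin (n-1) → Finset ℕ) : Prop :=
  ∀ j : Fin (n-1), ¬ s ⊂ z j

instance {n : ℕ} {s : Finset ℕ} {z : Fin (n-1) → Finset ℕ} : Decidable (GoodPat n s z) :=
  inferInstanceAs (Decidable (∀ j : Fin (n-1), ¬ s ⊂ z j))

lemma aux_ite_forall_prod {ι : Type*} [Fintype ι] (Q : ι → Prop) [DecidablePred Q] (a : ι → ℝ) :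
    (if (∀ j, Q j) then (∏ j, a j) else 0) = ∏ j, (if Q j then a j else 0) := by
  by_cases h : ∀ j, Q j
  · rw [if_pos h]; exact Finset.prod_congr rfl fun j _ => (if_pos (h j)).symm
  · rw [if_neg h]
    push_neg at h
    obtain ⟨j0, hj0⟩ := h
    exact (Finset.prod_eq_zero (f := fun j => if Q j then a j else 0)
      (Finset.mem_univ j0) (if_neg hj0)).symm


lemma cyl_max_iff {Ω : Type*} {X : ℕ → ℕ → Ω → ℝ} {k n : ℕ} (hn : 1 ≤ n)
    {s : Finset ℕ} {z : Fin (n-1) → Finset ℕ}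
    (hsA : s ⊆ Finset.range k) (hzA : ∀ j, z j ⊆ Finset.range k)
    {ω : Ω} (hω : ω ∈ cylSet X k n s z) :
    IsWeakParetoMax X k n 0 ω ↔ GoodPat n s z := by
  rw [mem_cylSet] at hω
  have h0 : ∀ m < k, X 0 m ω = if m ∈ s then 1 else 0 := by
    intro m hm; rw [hω 0 (by omega) m hm, patFn_zero]
  constructor
  · intro hmax j hsub
    have hjlt : (j : ℕ) < n - 1 := j.isLt
    have hj1 : (j : ℕ) + 1 < n := by omega
    have hz : ∀ m < k, X ((j : ℕ)+1) m ω = if m ∈ z j then 1 else 0 := by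
      intro m hm
      rw [hω ((j : ℕ)+1) hj1 m hm, patFn_succ n s z j j.isLt, Fin.eta]
    refine hmax ((j : ℕ)+1) hj1 (Nat.succ_ne_zero _) ⟨?_, ?_⟩
    · intro m hm
      rw [h0 m hm, hz m hm]
      by_cases hms : m ∈ s
      · rw [if_pos hms, if_pos (hsub.1 hms)]
      · rw [if_neg hms]; split_ifs <;> norm_num
    · obtain ⟨m, hmz, hms⟩ := Finset.exists_of_ssubset hsub
      have hmk : m < k := Finset.mem_range.mp (hzA j hmz)
      exact ⟨m, hmk, by rw [h0 m hmk, hz m hmk, if_neg hms, if_pos hmz]; norm_num⟩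
  · rintro hgood j hj hj0 ⟨hle, m, hmk, hlt⟩
    obtain ⟨i, rfl⟩ : ∃ i, j = i + 1 := ⟨j - 1, by omega⟩
    have hi : i < n - 1 := by omega
    apply hgood ⟨i, hi⟩
    have hz : ∀ m < k, X (i+1) m ω = if m ∈ z ⟨i, hi⟩ then 1 else 0 := by
      intro m hm; rw [hω (i+1) hj m hm, patFn_succ n s z i hi]
    have hsub : s ⊆ z ⟨i, hi⟩ := by
      intro a ha
      have hak : a < k := Finset.mem_range.mp (hsA ha)
      have hle' := hle a hak
      rw [h0 a hak, hz a hak, if_pos ha] at hle'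
      by_contra hna
      rw [if_neg hna] at hle'; linarith
    rw [Finset.ssubset_iff_of_subset hsub]
    rw [h0 m hmk, hz m hmk] at hlt
    by_cases hms : m ∈ s
    · rw [if_pos hms] at hlt; split_ifs at hlt <;> linarith
    · refine ⟨m, ?_, hms⟩
      by_contra hmz
      rw [if_neg hms, if_neg hmz] at hlt; linarith

lemma cyl_cover {Ω : Type*} (X : ℕ → ℕ → Ω → ℝ) (hval : ∀ i j ω, X i j ω = 0 ∨ X i j ω = 1)
    (k n : ℕ) (ω : Ω) :
    ∃ sz : Finset ℕ × (Fin (n-1) → Finset ℕ),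
      sz ∈ (Finset.range k).powerset ×ˢ
        Fintype.piFinset (fun _ : Fin (n-1) => (Finset.range k).powerset) ∧
      ω ∈ cylSet X k n sz.1 sz.2 := by
  classical
  refine ⟨((Finset.range k).filter (fun m => X 0 m ω = 1),
    fun j => (Finset.range k).filter (fun m => X ((j : ℕ)+1) m ω = 1)), ?_, ?_⟩
  · rw [Finset.mem_product]
    refine ⟨Finset.mem_powerset.mpr (Finset.filter_subset _ _), ?_⟩
    rw [Fintype.mem_piFinset]
    exact fun j => Finset.mem_powerset.mpr (Finset.filter_subset _ _)
  · rw [mem_cylSet]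
    intro j hj m hm
    have hpat : patFn n ((Finset.range k).filter (fun m => X 0 m ω = 1))
        (fun j => (Finset.range k).filter (fun m => X ((j : ℕ)+1) m ω = 1)) j
        = (Finset.range k).filter (fun m => X j m ω = 1) := by
      rcases Nat.eq_zero_or_pos j with rfl | hj0
      · exact patFn_zero _ _ _
      · obtain ⟨i, rfl⟩ : ∃ i, j = i + 1 := ⟨j-1, by omega⟩
        rw [patFn_succ _ _ _ i (by omega)]
    rw [hpat]
    rcases hval j m ω with h | h
    · have hno : m ∉ (Finset.range k).filter (fun m => X j m ω = 1) := by
        intro hc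
        rw [(Finset.mem_filter.mp hc).2] at h; norm_num at h
      rw [if_neg hno]; exact h
    · rw [if_pos (Finset.mem_filter.mpr ⟨Finset.mem_range.mpr hm, h⟩)]; exact h

lemma cyl_disjoint {Ω : Type*} {X : ℕ → ℕ → Ω → ℝ} {k n : ℕ} (hn : 1 ≤ n)
    {s s' : Finset ℕ} {z z' : Fin (n-1) → Finset ℕ}
    (hs : s ⊆ Finset.range k) (hs' : s' ⊆ Finset.range k)
    (hz : ∀ j, z j ⊆ Finset.range k) (hz' : ∀ j, z' j ⊆ Finset.range k)
    {ω : Ω} (h1 : ω ∈ cylSet X k n s z) (h2 : ω ∈ cylSet X k n s' z') :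
    s = s' ∧ z = z' := by
  rw [mem_cylSet] at h1 h2
  have key : ∀ j < n, ∀ m < k, (m ∈ patFn n s z j ↔ m ∈ patFn n s' z' j) := by
    intro j hj m hm
    have heq := (h1 j hj m hm).symm.trans (h2 j hj m hm)
    by_cases hh : m ∈ patFn n s z j <;> by_cases hh' : m ∈ patFn n s' z' j <;>
      simp [hh, hh'] at heq ⊢
  have hss : s = s' := by
    ext m
    by_cases hmk : m < k
    · have := key 0 (by omega) m hmk
      rwa [patFn_zero, patFn_zero] at this
    · exact ⟨fun hm => absurd (Finset.mem_range.mp (hs hm)) hmk,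
        fun hm => absurd (Finset.mem_range.mp (hs' hm)) hmk⟩
  refine ⟨hss, funext fun j => ?_⟩
  ext m
  by_cases hmk : m < k
  · have hjlt : (j : ℕ) < n - 1 := j.isLt
    have := key ((j : ℕ)+1) (by omega) m hmk
    rwa [patFn_succ n s z j j.isLt, patFn_succ n s' z' j j.isLt] at this
  · exact ⟨fun hm => absurd (Finset.mem_range.mp (hz j hm)) hmk,
      fun hm => absurd (Finset.mem_range.mp (hz' j hm)) hmk⟩

open MeasureTheory ProbabilityTheory Filter

lemma aux_prod_range_split {M : Type*} [CommMonoid M] (f : ℕ → M) {n : ℕ} (hn : 1 ≤ n) :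
    ∏ j ∈ Finset.range n, f j = f 0 * ∏ i ∈ Finset.range (n-1), f (i+1) := by
  obtain ⟨m, rfl⟩ : ∃ m, n = m + 1 := ⟨n-1, by omega⟩
  rw [Finset.prod_range_succ' f m]
  simp [mul_comm]

end Aux

/-- for iid Bernoulli(p) coordinates, for all `k, n ≥ 1`,
`q_{k,n}^{(p)} = Σ_{i=0}^{k} C(k,i) pⁱ (1-p)^{k-i} (1 - pⁱ + pⁱ (1-p)^{k-i})^{n-1}`. -/
theorem stmt_15 {Ω : Type*} [MeasurableSpace Ω] (P : Measure Ω) [IsProbabilityMeasure P]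
    (p : ℝ) (hp : p ∈ Set.Ioo (0 : ℝ) 1)
    (X : ℕ → ℕ → Ω → ℝ)
    (hmeas : ∀ i j, Measurable (X i j))
    (hindep : iIndepFun (fun q : ℕ × ℕ => X q.1 q.2) P)
    (hval : ∀ i j ω, X i j ω = 0 ∨ X i j ω = 1)
    (hp1 : ∀ i j, P {ω | X i j ω = 1} = ENNReal.ofReal p)
    (k n : ℕ) (hk : 1 ≤ k) (hn : 1 ≤ n) :
    (P {ω | IsWeakParetoMax X k n 0 ω}).toReal
      = ∑ i ∈ Finset.range (k + 1),
          (k.choose i : ℝ) * p ^ i * (1 - p) ^ (k - i)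
            * (1 - p ^ i + p ^ i * (1 - p) ^ (k - i)) ^ (n - 1) := by
  classical
  obtain ⟨hp0, hplt⟩ := hp
  have hc0 : (0:ℝ) ≤ 1 - p := by linarith
  -- probability of a coordinate being 0
  have hP0 : ∀ i j, P {ω | X i j ω = (0:ℝ)} = ENNReal.ofReal (1-p) := by
    intro i j
    have hset : {ω | X i j ω = (0:ℝ)} = {ω | X i j ω = (1:ℝ)}ᶜ := by
      ext ω
      simp only [Set.mem_setOf_eq, Set.mem_compl_iff]
      rcases hval i j ω with h | h <;> simp [h]
    have hms : MeasurableSet {ω | X i j ω = (1:ℝ)} := hmeas i j (measurableSet_singleton 1)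
    rw [hset, prob_compl_eq_one_sub hms, hp1 i j, ENNReal.ofReal_sub 1 hp0.le,
      ENNReal.ofReal_one]
  -- cylinder probabilities
  have hcylP : ∀ s z, P (cylSet X k n s z)
      = ∏ q ∈ Finset.range n ×ˢ Finset.range k,
          ENNReal.ofReal (if q.2 ∈ patFn n s z q.1 then p else 1 - p) := by
    intro s z
    rw [cylSet, hindep.meas_biInter (S := Finset.range n ×ˢ Finset.range k)
      (s := fun q => {ω | X q.1 q.2 ω = if q.2 ∈ patFn n s z q.1 then 1 else 0})
      (fun q _ =>
        ⟨{if q.2 ∈ patFn n s z q.1 then (1:ℝ) else 0}, measurableSet_singleton _, rfl⟩)]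
    refine Finset.prod_congr rfl fun q hq => ?_
    by_cases hmp : q.2 ∈ patFn n s z q.1
    · rw [if_pos hmp, if_pos hmp]; exact hp1 q.1 q.2
    · rw [if_neg hmp, if_neg hmp]; exact hP0 q.1 q.2
  -- real value of cylinder probabilities
  have hcylreal : ∀ s ∈ (Finset.range k).powerset,
      ∀ z ∈ Fintype.piFinset (fun _ : Fin (n-1) => (Finset.range k).powerset),
      (P (cylSet X k n s z)).toReal
        = (p ^ s.card * (1-p) ^ (k - s.card))
            * ∏ j : Fin (n-1), (p ^ (z j).card * (1-p) ^ (k - (z j).card)) := by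
    intro s hs z hz
    have hsA : s ⊆ Finset.range k := Finset.mem_powerset.mp hs
    have hzA : ∀ j, z j ⊆ Finset.range k := fun j =>
      Finset.mem_powerset.mp (Fintype.mem_piFinset.mp hz j)
    have hpatA : ∀ j, patFn n s z j ⊆ Finset.range k := by
      intro j
      unfold patFn
      split_ifs with h
      · exact hzA _
      · exact hsA
    have h1 : ∀ q ∈ Finset.range n ×ˢ Finset.range k,
        (ENNReal.ofReal (if q.2 ∈ patFn n s z q.1 then p else 1 - p)).toReal
          = (if q.2 ∈ patFn n s z q.1 then p else 1 - p) :=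
      fun q _ => ENNReal.toReal_ofReal (by split_ifs <;> linarith)
    rw [hcylP, ENNReal.toReal_prod, Finset.prod_congr rfl h1, Finset.prod_product]
    have hrow : ∀ j, (∏ m ∈ Finset.range k, (if m ∈ patFn n s z j then p else 1 - p))
        = p ^ (patFn n s z j).card * (1-p) ^ (k - (patFn n s z j).card) := by
      intro j
      have := aux_prod_ite_subset p (1-p) (hpatA j)
      rwa [Finset.card_range] at this
    rw [Finset.prod_congr rfl (fun j _ => hrow j), aux_prod_range_split _ hn, patFn_zero]
    congr 1
    rw [Finset.prod_range]
    refine Finset.prod_congr rfl fun i _ => ?_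
    rw [patFn_succ n s z i i.isLt]
  -- decomposition of the event into cylinders
  set I := (Finset.range k).powerset ×ˢ
    Fintype.piFinset (fun _ : Fin (n-1) => (Finset.range k).powerset) with hI
  set G : Finset ℕ × (Fin (n-1) → Finset ℕ) → Set Ω :=
    fun sz => if GoodPat n sz.1 sz.2 then cylSet X k n sz.1 sz.2 else ∅ with hG
  have hsubs : ∀ sz ∈ I, sz.1 ⊆ Finset.range k ∧ ∀ j, sz.2 j ⊆ Finset.range k := by
    intro sz hsz
    obtain ⟨hs, hz⟩ := Finset.mem_product.mp hsz
    exact ⟨Finset.mem_powerset.mp hs,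
      fun j => Finset.mem_powerset.mp (Fintype.mem_piFinset.mp hz j)⟩
  have hcylmeas : ∀ s z, MeasurableSet (cylSet X k n s z) := by
    intro s z
    exact Finset.measurableSet_biInter _
      (fun q _ => hmeas q.1 q.2 (measurableSet_singleton _))
  have hGmeas : ∀ sz, MeasurableSet (G sz) := by
    intro sz
    simp only [hG]
    split_ifs
    · exact hcylmeas _ _
    · exact MeasurableSet.empty
  have hEeq : {ω | IsWeakParetoMax X k n 0 ω} = ⋃ sz ∈ I, G sz := by
    ext ω
    simp only [Set.mem_setOf_eq, Set.mem_iUnion]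
    constructor
    · intro hmax
      obtain ⟨sz, hszI, hωc⟩ := cyl_cover X hval k n ω
      refine ⟨sz, hszI, ?_⟩
      obtain ⟨hsA, hzA⟩ := hsubs sz hszI
      have hgood : GoodPat n sz.1 sz.2 := (cyl_max_iff hn hsA hzA hωc).mp hmax
      simp only [hG]
      rw [if_pos hgood]
      exact hωc
    · rintro ⟨sz, hszI, hωG⟩
      obtain ⟨hsA, hzA⟩ := hsubs sz hszI
      simp only [hG] at hωG
      by_cases hgood : GoodPat n sz.1 sz.2
      · rw [if_pos hgood] at hωG
        exact (cyl_max_iff hn hsA hzA hωG).mpr hgood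
      · rw [if_neg hgood] at hωG
        exact absurd hωG (Set.notMem_empty ω)
  have hdisj : (↑I : Set (Finset ℕ × (Fin (n-1) → Finset ℕ))).PairwiseDisjoint G := by
    intro a ha b hb hab
    simp only [Function.onFun]
    rw [Set.disjoint_left]
    intro ω hωa hωb
    simp only [hG] at hωa hωb
    by_cases hga : GoodPat n a.1 a.2
    · by_cases hgb : GoodPat n b.1 b.2
      · rw [if_pos hga] at hωa
        rw [if_pos hgb] at hωb
        obtain ⟨ha1, ha2⟩ := hsubs a (by exact_mod_cast ha)
        obtain ⟨hb1, hb2⟩ := hsubs b (by exact_mod_cast hb)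
        obtain ⟨h1, h2⟩ := cyl_disjoint hn ha1 hb1 ha2 hb2 hωa hωb
        exact hab (Prod.ext h1 h2)
      · rw [if_neg hgb] at hωb
        exact absurd hωb (Set.notMem_empty ω)
    · rw [if_neg hga] at hωa
      exact absurd hωa (Set.notMem_empty ω)
  rw [hEeq, measure_biUnion_finset hdisj (fun sz _ => hGmeas sz),
    ENNReal.toReal_sum (fun sz _ => measure_ne_top P _)]
  have hterm : ∀ sz ∈ I, (P (G sz)).toReal
      = (if GoodPat n sz.1 sz.2 then
          (p ^ sz.1.card * (1-p) ^ (k - sz.1.card))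
            * ∏ j : Fin (n-1), (p ^ (sz.2 j).card * (1-p) ^ (k - (sz.2 j).card))
        else 0) := by
    intro sz hsz
    obtain ⟨hs, hz⟩ := Finset.mem_product.mp hsz
    simp only [hG]
    split_ifs with hgood
    · exact hcylreal sz.1 hs sz.2 hz
    · simp
  rw [Finset.sum_congr rfl hterm, hI, Finset.sum_product]
  -- inner sums
  have hinner : ∀ s ∈ (Finset.range k).powerset,
      (∑ z ∈ Fintype.piFinset (fun _ : Fin (n-1) => (Finset.range k).powerset),
        (if GoodPat n s z then
          (p ^ s.card * (1-p) ^ (k - s.card))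
            * ∏ j : Fin (n-1), (p ^ (z j).card * (1-p) ^ (k - (z j).card))
        else 0))
      = (p ^ s.card * (1-p) ^ (k - s.card))
          * (1 - p ^ s.card + p ^ s.card * (1-p) ^ (k - s.card)) ^ (n-1) := by
    intro s hs
    have hsA : s ⊆ Finset.range k := Finset.mem_powerset.mp hs
    have hRs : ∑ t ∈ (Finset.range k).powerset,
        (if ¬ s ⊂ t then p ^ t.card * (1-p) ^ (k - t.card) else 0)
          = 1 - p ^ s.card + p ^ s.card * (1-p) ^ (k - s.card) := by
      have h := aux_nodom_sum p (1-p) hsA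
      rw [Finset.card_range] at h
      have hpc : p + (1 - p) = (1:ℝ) := by ring
      rw [hpc, one_pow, one_pow, mul_one] at h
      exact h
    have hstep : ∀ z : Fin (n-1) → Finset ℕ,
        (if GoodPat n s z then
          (p ^ s.card * (1-p) ^ (k - s.card))
            * ∏ j : Fin (n-1), (p ^ (z j).card * (1-p) ^ (k - (z j).card))
        else 0)
        = (p ^ s.card * (1-p) ^ (k - s.card))
            * ∏ j : Fin (n-1),
                (if ¬ s ⊂ z j then p ^ (z j).card * (1-p) ^ (k - (z j).card) else 0) := by
      intro z
      have haux := aux_ite_forall_prod (fun j : Fin (n-1) => ¬ s ⊂ z j)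
        (fun j => p ^ (z j).card * (1-p) ^ (k - (z j).card))
      by_cases hgood : GoodPat n s z
      · rw [if_pos (fun j => hgood j)] at haux
        rw [if_pos hgood, haux]
      · rw [if_neg (fun hc => hgood (fun j => hc j))] at haux
        rw [if_neg hgood, ← haux, mul_zero]
    rw [Finset.sum_congr rfl (fun z _ => hstep z), ← Finset.mul_sum]
    congr 1
    rw [← Finset.prod_univ_sum (fun _ : Fin (n-1) => (Finset.range k).powerset)
      (fun _ t => if ¬ s ⊂ t then p ^ t.card * (1-p) ^ (k - t.card) else 0)]
    rw [Finset.prod_congr rfl (fun j _ => hRs)]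
    rw [Finset.prod_const, Finset.card_univ, Fintype.card_fin]
  rw [Finset.sum_congr rfl hinner]
  exact aux_key p k n
end

section
/- Let the coordinates be i.i.d. Bernoulli(p) random variables for some p ∈ (0,1) and let k ≥ 1 be fixed. Then the probability q_{k,n}^{(p)} that the first vector is a weak maximum converges to p^k as n → ∞. -/
open MeasureTheory ProbabilityTheory Filter

/-- for iid Bernoulli(p) coordinates and fixed `k ≥ 1`, the probability
`q_{k,n}^{(p)}` that the first vector is a weak maximum converges to `p^k` as `n → ∞`. -/
theorem stmt_16 {Ω : Type*} [MeasurableSpace Ω] (P : Measure Ω) [IsProbabilityMeasure P]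
    (p : ℝ) (hp : p ∈ Set.Ioo (0 : ℝ) 1)
    (X : ℕ → ℕ → Ω → ℝ)
    (hmeas : ∀ i j, Measurable (X i j))
    (hindep : iIndepFun (fun q : ℕ × ℕ => X q.1 q.2) P)
    (hval : ∀ i j ω, X i j ω = 0 ∨ X i j ω = 1)
    (hp1 : ∀ i j, P {ω | X i j ω = 1} = ENNReal.ofReal p)
    (k : ℕ) (hk : 1 ≤ k) :
    Filter.Tendsto (fun n : ℕ => (P {ω | IsWeakParetoMax X k n 0 ω}).toReal)
      Filter.atTop (nhds (p ^ k)) := by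
  obtain ⟨hp0, hplt1⟩ := hp
  have hpk0 : (0 : ℝ) < p ^ k := pow_pos hp0 k
  have hpk1 : p ^ k ≤ 1 := pow_le_one₀ hp0.le hplt1.le
  -- the "all-ones" events
  set D : ℕ → Set Ω := fun j => ⋂ m ∈ Finset.range k, {ω | X j m ω = 1} with hDdef
  have hDmeas : ∀ j, MeasurableSet (D j) := by
    intro j
    exact Finset.measurableSet_biInter _ fun m _ => hmeas j m (measurableSet_singleton 1)
  -- probability of each all-ones event
  have hD : ∀ j, P (D j) = ENNReal.ofReal (p ^ k) := by
    intro j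
    have := hindep.meas_biInter (S := (Finset.range k).image (fun m => (j, m)))
      (s := fun q => {ω | X q.1 q.2 ω = 1})
      (fun q _ => ⟨{1}, measurableSet_singleton 1, rfl⟩)
    have h1 : (⋂ q ∈ (Finset.range k).image (fun m => (j, m)), {ω | X q.1 q.2 ω = 1}) = D j := by
      ext ω; simp [hDdef]
    rw [h1, Finset.prod_image (fun a _ b _ h => by simpa using congrArg Prod.snd h)] at this
    rw [this]
    simp only [hp1]
    rw [Finset.prod_const, Finset.card_range, ENNReal.ofReal_pow hp0.le]
  -- the all-ones events over distinct rows are independent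
  have hiis : iIndepSet D P := by
    rw [iIndepSet_iff_meas_biInter hDmeas]
    intro s
    have := hindep.meas_biInter (S := s ×ˢ Finset.range k)
      (s := fun q => {ω | X q.1 q.2 ω = 1})
      (fun q _ => ⟨{1}, measurableSet_singleton 1, rfl⟩)
    have h1 : (⋂ q ∈ s ×ˢ Finset.range k, {ω | X q.1 q.2 ω = 1}) = ⋂ j ∈ s, D j := by
      ext ω; simp [hDdef, Finset.mem_product]; tauto
    rw [h1, Finset.prod_product] at this
    rw [this]
    refine Finset.prod_congr rfl fun j _ => ?_
    rw [hD j]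
    simp only [hp1]
    rw [Finset.prod_const, Finset.card_range, ENNReal.ofReal_pow hp0.le]
  -- probability that none of rows 1..n-1 is all ones
  have hC : ∀ n : ℕ, P (⋂ j ∈ Finset.Ico 1 n, (D j)ᶜ) = ENNReal.ofReal ((1 - p ^ k) ^ (n - 1)) := by
    intro n
    have hmeasC : ∀ j ∈ Finset.Ico 1 n,
        MeasurableSet[MeasurableSpace.generateFrom {D j}] ((D j)ᶜ) :=
      fun j _ => (MeasurableSpace.measurableSet_generateFrom (show D j ∈ ({D j} : Set (Set Ω)) from rfl)).compl
    have := ((iIndepSet_iff_iIndep D P).1 hiis).meas_biInter (s := fun j => (D j)ᶜ) hmeasC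
    rw [this]
    have hcompl : ∀ j, P ((D j)ᶜ) = ENNReal.ofReal (1 - p ^ k) := by
      intro j
      rw [prob_compl_eq_one_sub (hDmeas j), hD j, ENNReal.ofReal_sub _ (le_of_lt hpk0),
        ENNReal.ofReal_one]
    calc ∏ j ∈ Finset.Ico 1 n, P ((D j)ᶜ)
        = ∏ _j ∈ Finset.Ico 1 n, ENNReal.ofReal (1 - p ^ k) :=
          Finset.prod_congr rfl fun j _ => hcompl j
      _ = ENNReal.ofReal (1 - p ^ k) ^ (n - 1) := by
          rw [Finset.prod_const, Nat.card_Ico]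
      _ = ENNReal.ofReal ((1 - p ^ k) ^ (n - 1)) := by
          rw [ENNReal.ofReal_pow (by linarith)]
  -- set inclusions
  have hAW : ∀ n, D 0 ⊆ {ω | IsWeakParetoMax X k n 0 ω} := by
    intro n ω hω j hj hj0 hcon
    obtain ⟨hle, m, hm, hlt⟩ := hcon
    have h0 : X 0 m ω = 1 := by
      have := Set.mem_iInter₂.1 hω m (Finset.mem_range.2 hm)
      exact this
    rcases hval j m ω with h | h <;> rw [h0] at hlt <;> linarith [hlt, h.ge, h.le]
  have hWU : ∀ n, {ω | IsWeakParetoMax X k n 0 ω} ⊆ D 0 ∪ ⋂ j ∈ Finset.Ico 1 n, (D j)ᶜ := by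
    intro n ω hω
    by_cases hA : ω ∈ D 0
    · exact Or.inl hA
    · refine Or.inr (Set.mem_iInter₂.2 fun j hj hDj => ?_)
      rw [Finset.mem_Ico] at hj
      -- ω not all ones in row 0: get a zero coordinate
      have : ∃ m < k, X 0 m ω = 0 := by
        by_contra hcon
        push_neg at hcon
        refine hA (Set.mem_iInter₂.2 fun m hm => ?_)
        rw [Finset.mem_range] at hm
        rcases hval 0 m ω with h | h
        · exact absurd h (hcon m hm)
        · exact h
      obtain ⟨m0, hm0, hz⟩ := this
      have hallj : ∀ m < k, X j m ω = 1 := fun m hm =>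
        Set.mem_iInter₂.1 hDj m (Finset.mem_range.2 hm)
      refine hω j hj.2 (Nat.one_le_iff_ne_zero.1 hj.1) ⟨fun m hm => ?_, m0, hm0, ?_⟩
      · rw [hallj m hm]
        rcases hval 0 m ω with h | h <;> rw [h] <;> norm_num
      · rw [hz, hallj m0 hm0]; norm_num
  -- bounds on the probability
  have hlow : ∀ n, p ^ k ≤ (P {ω | IsWeakParetoMax X k n 0 ω}).toReal := by
    intro n
    have h1 : P (D 0) ≤ P {ω | IsWeakParetoMax X k n 0 ω} := measure_mono (hAW n)
    have := ENNReal.toReal_mono (measure_ne_top P _) h1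
    rwa [hD 0, ENNReal.toReal_ofReal hpk0.le] at this
  have hr0 : (0 : ℝ) ≤ 1 - p ^ k := by linarith
  have hup : ∀ n, (P {ω | IsWeakParetoMax X k n 0 ω}).toReal
      ≤ p ^ k + (1 - p ^ k) ^ (n - 1) := by
    intro n
    have h1 : P {ω | IsWeakParetoMax X k n 0 ω}
        ≤ ENNReal.ofReal (p ^ k + (1 - p ^ k) ^ (n - 1)) := by
      refine le_trans (measure_mono (hWU n)) (le_trans (measure_union_le _ _) ?_)
      rw [hD 0, hC n, ENNReal.ofReal_add hpk0.le (pow_nonneg hr0 _)]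
    exact ENNReal.toReal_le_of_le_ofReal (add_nonneg hpk0.le (pow_nonneg hr0 _)) h1
  -- squeeze
  have hr1 : 1 - p ^ k < 1 := by linarith
  have htend : Tendsto (fun n : ℕ => p ^ k + (1 - p ^ k) ^ (n - 1)) atTop (nhds (p ^ k)) := by
    have h0 : Tendsto (fun n : ℕ => (1 - p ^ k) ^ (n - 1)) atTop (nhds 0) :=
      (tendsto_pow_atTop_nhds_zero_of_lt_one hr0 hr1).comp (tendsto_sub_atTop_nat 1)
    simpa using tendsto_const_nhds.add h0
  exact tendsto_of_tendsto_of_tendsto_of_le_of_le tendsto_const_nhds htend hlow hup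
end

section
/- Let the coordinates X_{ij} be i.i.d. Bernoulli(p) random variables for some p ∈ (0,1). Then for all integers k ≥ 1 and n ≥ 2, the probability that both the first and second vectors belong to the Pareto-front equals Σ over nonnegative integers a,d ≥ 0 and b,c ≥ 1 with a+b+c+d = k of the multinomial coefficient k!/(a! b! c! d!) times (1−p)^{2a} [p(1−p)]^{b+c} p^{2d} times [1 − p^d (p^b + p^c − p^{b+c})]^{n−2}. -/
open MeasureTheory ProbabilityTheory Filter

section Aux

open Finset

variable {α : Type*} [Fintype α] [DecidableEq α]

def fibcnt {k : ℕ} (t : Fin k → α) (x : α) : ℕ := (univ.filter fun m => t m = x).card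

lemma sum_fibcnt {k : ℕ} (t : Fin k → α) : ∑ x : α, fibcnt t x = k := by
  have := Finset.card_eq_sum_card_fiberwise (f := t) (s := univ) (t := univ)
    (fun x _ => mem_univ _)
  simpa [fibcnt] using this.symm

omit [DecidableEq α] in
lemma prod_X_pow_univ (g : α → ℕ) :
    ∏ x : α, (MvPolynomial.X x : MvPolynomial α ℕ) ^ g x
      = MvPolynomial.monomial (Finsupp.equivFunOnFinite.symm g) 1 := by
  rw [← MvPolynomial.prod_X_pow_eq_monomial]
  refine (Finset.prod_subset (Finset.subset_univ _) ?_).symm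
  intro x _ hx
  have h0 : (Finsupp.equivFunOnFinite.symm g) x = 0 := by
    simpa [Finsupp.mem_support_iff] using hx
  simp only [Finsupp.coe_equivFunOnFinite_symm] at h0 ⊢
  rw [h0, pow_zero]

lemma card_fibcnt_eq (k : ℕ) (f : α → ℕ) (hf : ∑ x : α, f x = k) :
    ((univ : Finset (Fin k → α)).filter fun t => fibcnt t = f).card
      = Nat.multinomial univ f := by
  classical
  have key : ∑ t : Fin k → α, ∏ x : α, (MvPolynomial.X x : MvPolynomial α ℕ) ^ fibcnt t x
      = ∑ g ∈ piAntidiag (univ : Finset α) k,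
          (Nat.multinomial univ g : MvPolynomial α ℕ) * ∏ x : α, MvPolynomial.X x ^ g x := by
    rw [← Finset.sum_pow_eq_sum_piAntidiag]
    refine Eq.symm ?_
    calc (∑ x : α, (MvPolynomial.X x : MvPolynomial α ℕ)) ^ k
        = ∏ _m : Fin k, ∑ x : α, (MvPolynomial.X x : MvPolynomial α ℕ) := by
          rw [Finset.prod_const, card_univ, Fintype.card_fin]
      _ = ∑ t ∈ Fintype.piFinset (fun _ : Fin k => (univ : Finset α)),
            ∏ m : Fin k, MvPolynomial.X (t m) := Finset.prod_univ_sum _ _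
      _ = ∑ t : Fin k → α, ∏ x : α, (MvPolynomial.X x : MvPolynomial α ℕ) ^ fibcnt t x := by
          rw [Fintype.piFinset_univ]
          refine Finset.sum_congr rfl fun t _ => ?_
          rw [Finset.prod_comp]
          refine Finset.prod_subset (subset_univ _) fun x _ hx => ?_
          have h0 : fibcnt t x = 0 := by
            simp only [fibcnt, Finset.card_eq_zero, Finset.filter_eq_empty_iff]
            intro m _
            exact fun h => hx (Finset.mem_image.2 ⟨m, mem_univ _, h⟩)
          show MvPolynomial.X x ^ fibcnt t x = 1
          rw [h0, pow_zero]
  have hcoeff := congrArg (MvPolynomial.coeff (Finsupp.equivFunOnFinite.symm f)) key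
  rw [MvPolynomial.coeff_sum, MvPolynomial.coeff_sum] at hcoeff
  have hL : ∑ t : Fin k → α,
      MvPolynomial.coeff (Finsupp.equivFunOnFinite.symm f)
        (∏ x : α, (MvPolynomial.X x : MvPolynomial α ℕ) ^ fibcnt t x)
      = ((univ : Finset (Fin k → α)).filter fun t => fibcnt t = f).card := by
    rw [Finset.card_filter]
    refine Finset.sum_congr rfl fun t _ => ?_
    rw [prod_X_pow_univ, MvPolynomial.coeff_monomial]
    simp [Equiv.apply_eq_iff_eq]
  have hR : ∑ g ∈ piAntidiag (univ : Finset α) k,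
      MvPolynomial.coeff (Finsupp.equivFunOnFinite.symm f)
        ((Nat.multinomial univ g : MvPolynomial α ℕ) * ∏ x : α, MvPolynomial.X x ^ g x)
      = Nat.multinomial univ f := by
    have hstep : ∀ g ∈ piAntidiag (univ : Finset α) k,
        MvPolynomial.coeff (Finsupp.equivFunOnFinite.symm f)
          ((Nat.multinomial univ g : MvPolynomial α ℕ) * ∏ x : α, MvPolynomial.X x ^ g x)
        = if g = f then Nat.multinomial univ f else 0 := by
      intro g _
      rw [prod_X_pow_univ, ← MvPolynomial.C_eq_coe_nat, MvPolynomial.coeff_C_mul,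
        MvPolynomial.coeff_monomial]
      by_cases h : g = f <;> simp [h, Equiv.apply_eq_iff_eq]
    rw [Finset.sum_congr rfl hstep, Finset.sum_ite_eq' (piAntidiag (univ : Finset α) k) f]
    rw [if_pos]
    simp [hf]
  rw [hL, hR] at hcoeff
  exact_mod_cast hcoeff

lemma sum_fibcnt_group (k : ℕ) (F : (α → ℕ) → ℝ) :
    ∑ t : Fin k → α, F (fibcnt t)
      = ∑ f ∈ piAntidiag (univ : Finset α) k, (Nat.multinomial univ f : ℝ) * F f := by
  classical
  rw [← Finset.sum_fiberwise_of_maps_to (g := fibcnt)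
    (fun t _ => Finset.mem_piAntidiag.2 ⟨by simpa using sum_fibcnt t, fun i _ => mem_univ i⟩)
    (fun t => F (fibcnt t))]
  refine Finset.sum_congr rfl fun f hf => ?_
  have hsum : ∑ x : α, f x = k := by simpa using (Finset.mem_piAntidiag.1 hf).1
  calc ∑ t ∈ univ.filter fun t : Fin k → α => fibcnt t = f, F (fibcnt t)
      = ∑ t ∈ univ.filter fun t : Fin k → α => fibcnt t = f, F f := by
        refine Finset.sum_congr rfl fun t ht => ?_
        rw [(Finset.mem_filter.1 ht).2]
    _ = (Nat.multinomial univ f : ℝ) * F f := by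
        rw [Finset.sum_const, card_fibcnt_eq k f hsum, nsmul_eq_mul]

lemma multinomial_bb_real (f : Bool × Bool → ℕ) :
    (Nat.multinomial (univ : Finset (Bool × Bool)) f : ℝ)
      = ((∑ x : Bool × Bool, f x).factorial : ℝ)
        / ((f (false, false)).factorial * (f (true, false)).factorial
            * (f (false, true)).factorial * (f (true, true)).factorial) := by
  have hspec := Nat.multinomial_spec (univ : Finset (Bool × Bool)) f
  have hprod : (∏ x : Bool × Bool, (f x).factorial)
      = (f (false, false)).factorial * (f (true, false)).factorial
          * (f (false, true)).factorial * (f (true, true)).factorial := by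
    rw [Fintype.prod_prod_type]
    simp [Fintype.prod_bool]
    ring
  rw [eq_div_iff]
  · have h2 : ((∏ x : Bool × Bool, (f x).factorial : ℕ) : ℝ) * (Nat.multinomial univ f : ℝ)
        = ((∑ x : Bool × Bool, f x).factorial : ℝ) := by exact_mod_cast congrArg (fun z : ℕ => (z : ℝ)) hspec
    rw [← h2, hprod]
    push_cast
    ring
  · positivity

def quadf (a b c d : ℕ) : Bool × Bool → ℕ :=
  fun x => if x.1 then (if x.2 then d else b) else (if x.2 then c else a)

lemma sum4_eq (k : ℕ) (φ : ℕ → ℕ → ℕ → ℕ → ℝ) :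
    ∑ q ∈ ((range (k+1) ×ˢ range (k+1)) ×ˢ (range (k+1) ×ˢ range (k+1))),
        φ q.1.1 q.1.2 q.2.1 q.2.2
      = ∑ a ∈ range (k+1), ∑ b ∈ range (k+1), ∑ c ∈ range (k+1), ∑ d ∈ range (k+1),
          φ a b c d := by
  calc ∑ q ∈ ((range (k+1) ×ˢ range (k+1)) ×ˢ (range (k+1) ×ˢ range (k+1))),
        φ q.1.1 q.1.2 q.2.1 q.2.2
      = ∑ p ∈ range (k+1) ×ˢ range (k+1), ∑ q ∈ range (k+1) ×ˢ range (k+1),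
          φ p.1 p.2 q.1 q.2 := Finset.sum_product _ _ _
    _ = ∑ p ∈ range (k+1) ×ˢ range (k+1), ∑ c ∈ range (k+1), ∑ d ∈ range (k+1),
          φ p.1 p.2 c d := Finset.sum_congr rfl fun p _ => Finset.sum_product _ _ _
    _ = ∑ a ∈ range (k+1), ∑ b ∈ range (k+1), ∑ c ∈ range (k+1), ∑ d ∈ range (k+1),
          φ a b c d := Finset.sum_product _ _ _

lemma sum_piAntidiag_bb (k : ℕ) (G : ℕ → ℕ → ℕ → ℕ → ℝ) :
    ∑ f ∈ piAntidiag (univ : Finset (Bool × Bool)) k,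
      (Nat.multinomial univ f : ℝ)
        * G (f (false,false)) (f (true,false)) (f (false,true)) (f (true,true))
      = ∑ a ∈ range (k+1), ∑ b ∈ range (k+1), ∑ c ∈ range (k+1), ∑ d ∈ range (k+1),
          if a + b + c + d = k then
            ((k.factorial : ℝ) / (a.factorial * b.factorial * c.factorial * d.factorial))
              * G a b c d
          else 0 := by
  classical
  rw [← sum4_eq k (fun a b c d => if a + b + c + d = k then
      ((k.factorial : ℝ) / (a.factorial * b.factorial * c.factorial * d.factorial))
        * G a b c d else 0)]
  rw [← Finset.sum_filter]
  refine Finset.sum_nbij'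
    (fun f => ((f (false,false), f (true,false)), (f (false,true), f (true,true))))
    (fun q => quadf q.1.1 q.1.2 q.2.1 q.2.2) ?_ ?_ ?_ ?_ ?_
  · intro f hf
    rw [Finset.mem_piAntidiag] at hf
    have hsum : f (false,false) + f (true,false) + f (false,true) + f (true,true) = k := by
      have := hf.1
      simp only [Fintype.sum_prod_type, Fintype.sum_bool] at this
      omega
    have hle : ∀ x : Bool × Bool, f x ≤ k := by
      intro x
      rw [← hf.1]
      exact Finset.single_le_sum (fun _ _ => Nat.zero_le _) (mem_univ x)
    simp only [Finset.mem_filter, Finset.mem_product, Finset.mem_range]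
    refine ⟨⟨⟨?_, ?_⟩, ?_, ?_⟩, hsum⟩ <;> exact Nat.lt_succ_of_le (hle _)
  · intro q hq
    rw [Finset.mem_filter] at hq
    rw [Finset.mem_piAntidiag]
    refine ⟨?_, fun i _ => mem_univ i⟩
    have h2 := hq.2
    simp [Fintype.sum_prod_type, Fintype.sum_bool, quadf]
    omega
  · intro f _
    funext x
    rcases x with ⟨x1, x2⟩
    cases x1 <;> cases x2 <;> simp [quadf]
  · intro q _
    rcases q with ⟨⟨a, b⟩, ⟨c, d⟩⟩
    simp [quadf]
  · intro f hf
    rw [Finset.mem_piAntidiag] at hf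
    have hsum : ∑ x : Bool × Bool, f x = k := by simpa using hf.1
    rw [multinomial_bb_real, hsum]

/-! ### Part B: algebra -/

def wB (p : ℝ) : Bool → ℝ := fun b => if b then p else 1 - p

def WW (p : ℝ) {k : ℕ} (s : Fin k → Bool) : ℝ := ∏ m, wB p (s m)

def leB {k : ℕ} (u v : Fin k → Bool) : Prop := ∀ m, u m = true → v m = true

instance {k : ℕ} (u v : Fin k → Bool) : Decidable (leB u v) := by
  unfold leB; infer_instance

lemma dom_sum (p : ℝ) {k : ℕ} (t : Fin k → Bool) :
    ∑ s : Fin k → Bool, (if leB t s then WW p s else 0)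
      = p ^ (univ.filter fun m => t m = true).card := by
  classical
  have hterm : ∀ s : Fin k → Bool, (if leB t s then WW p s else 0)
      = ∏ m, (if t m = true then (if s m = true then p else 0) else wB p (s m)) := by
    intro s
    by_cases h : leB t s
    · rw [if_pos h]
      refine Finset.prod_congr rfl fun m _ => ?_
      by_cases hm : t m = true
      · rw [if_pos hm, if_pos (h m hm)]
        simp [wB, h m hm]
      · rw [if_neg hm]
    · rw [if_neg h]
      unfold leB at h
      push_neg at h
      obtain ⟨m, hm1, hm2⟩ := h
      refine (Finset.prod_eq_zero (mem_univ m) ?_).symm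
      rw [if_pos hm1, if_neg hm2]
  rw [Finset.sum_congr rfl fun s _ => hterm s]
  have hps := Finset.prod_univ_sum (fun _ : Fin k => (univ : Finset Bool))
    (fun m b => if t m = true then (if b = true then p else 0) else wB p b)
  rw [Fintype.piFinset_univ] at hps
  rw [← hps]
  have hcol : ∀ m : Fin k,
      (∑ b : Bool, if t m = true then (if b = true then p else 0) else wB p b)
        = if t m = true then p else 1 := by
    intro m
    by_cases hm : t m = true <;> simp [hm, wB] <;> ring
  rw [Finset.prod_congr rfl fun m _ => hcol m, Finset.prod_ite]
  simp

lemma WW_sum (p : ℝ) {k : ℕ} : ∑ s : Fin k → Bool, WW p s = 1 := by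
  have h := dom_sum p (fun _ : Fin k => false)
  simp [leB] at h
  simpa using h

lemma T_lemma (p : ℝ) {k : ℕ} (u v : Fin k → Bool) :
    ∑ s : Fin k → Bool, (if ¬ leB u s ∧ ¬ leB v s then WW p s else 0)
      = 1 - p ^ (univ.filter fun m => u m = true).card
          - p ^ (univ.filter fun m => v m = true).card
          + p ^ (univ.filter fun m => u m = true ∨ v m = true).card := by
  classical
  have hsup : ∀ s : Fin k → Bool,
      (leB (fun m => u m || v m) s) ↔ (leB u s ∧ leB v s) := by
    intro s
    constructor
    · intro h
      exact ⟨fun m hm => h m (by simp [hm]), fun m hm => h m (by simp [hm])⟩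
    · rintro ⟨h1, h2⟩ m hm
      rcases Bool.or_eq_true_iff.1 hm with h | h
      · exact h1 m h
      · exact h2 m h
  have hterm : ∀ s : Fin k → Bool,
      (if ¬ leB u s ∧ ¬ leB v s then WW p s else 0)
        = WW p s - (if leB u s then WW p s else 0) - (if leB v s then WW p s else 0)
            + (if leB (fun m => u m || v m) s then WW p s else 0) := by
    intro s
    rw [if_congr (hsup s) rfl rfl]
    by_cases h1 : leB u s <;> by_cases h2 : leB v s <;>
      simp [h1, h2] <;> ring
  rw [Finset.sum_congr rfl fun s _ => hterm s]
  rw [Finset.sum_add_distrib, Finset.sum_sub_distrib, Finset.sum_sub_distrib,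
    WW_sum, dom_sum, dom_sum, dom_sum]
  have hfil : (univ.filter fun m => (u m || v m) = true)
      = (univ.filter fun m => u m = true ∨ v m = true) := by
    refine Finset.filter_congr fun m _ => ?_
    simp
  rw [hfil]

lemma fib_split {k : ℕ} (t : Fin k → Bool × Bool) (P : Bool × Bool → Prop) [DecidablePred P] :
    (univ.filter fun m => P (t m)).card = ∑ x ∈ univ.filter P, fibcnt t x := by
  classical
  rw [Finset.card_eq_sum_card_fiberwise (f := t) (t := univ.filter P)
      (fun m hm => by
        simp only [Finset.mem_coe, Finset.mem_filter, Finset.mem_univ, true_and] at hm ⊢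
        exact hm)]
  refine Finset.sum_congr rfl fun x hx => ?_
  have hPx := (Finset.mem_filter.1 hx).2
  unfold fibcnt
  congr 1
  ext m
  simp only [Finset.mem_filter, Finset.mem_univ, true_and]
  constructor
  · rintro ⟨_, h2⟩; exact h2
  · intro h; exact ⟨by rw [h]; exact hPx, h⟩

lemma WW_eval (p : ℝ) {k : ℕ} (u : Fin k → Bool) :
    WW p u = p ^ (univ.filter fun m => u m = true).card
      * (1 - p) ^ (univ.filter fun m => ¬ u m = true).card := by
  unfold WW wB
  rw [Finset.prod_ite]
  simp

lemma not_leB_iff {k : ℕ} (u v : Fin k → Bool) :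
    ¬ leB u v ↔ 0 < (univ.filter fun m => u m = true ∧ v m = false).card := by
  classical
  rw [Finset.card_pos, Finset.filter_nonempty_iff]
  unfold leB
  push_neg
  simp [Bool.not_eq_true]

lemma card_u {k : ℕ} (t : Fin k → Bool × Bool) :
    (univ.filter fun m => (t m).1 = true).card
      = fibcnt t (true, false) + fibcnt t (true, true) := by
  rw [fib_split t (fun x => x.1 = true)]
  have h : (univ.filter fun x : Bool × Bool => x.1 = true)
      = ({(true, false), (true, true)} : Finset (Bool × Bool)) := by decide
  rw [h, Finset.sum_insert (by decide), Finset.sum_singleton]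

lemma card_v {k : ℕ} (t : Fin k → Bool × Bool) :
    (univ.filter fun m => (t m).2 = true).card
      = fibcnt t (false, true) + fibcnt t (true, true) := by
  rw [fib_split t (fun x => x.2 = true)]
  have h : (univ.filter fun x : Bool × Bool => x.2 = true)
      = ({(false, true), (true, true)} : Finset (Bool × Bool)) := by decide
  rw [h, Finset.sum_insert (by decide), Finset.sum_singleton]

lemma card_uv {k : ℕ} (t : Fin k → Bool × Bool) :
    (univ.filter fun m => (t m).1 = true ∨ (t m).2 = true).card
      = fibcnt t (true, false) + fibcnt t (false, true) + fibcnt t (true, true) := by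
  rw [fib_split t (fun x => x.1 = true ∨ x.2 = true)]
  have h : (univ.filter fun x : Bool × Bool => x.1 = true ∨ x.2 = true)
      = ({(true, false), (false, true), (true, true)} : Finset (Bool × Bool)) := by decide
  rw [h, Finset.sum_insert (by decide), Finset.sum_insert (by decide), Finset.sum_singleton]
  ring

lemma card_nu {k : ℕ} (t : Fin k → Bool × Bool) :
    (univ.filter fun m => ¬ (t m).1 = true).card
      = fibcnt t (false, false) + fibcnt t (false, true) := by
  rw [fib_split t (fun x => ¬ x.1 = true)]
  have h : (univ.filter fun x : Bool × Bool => ¬ x.1 = true)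
      = ({(false, false), (false, true)} : Finset (Bool × Bool)) := by decide
  rw [h, Finset.sum_insert (by decide), Finset.sum_singleton]

lemma card_nv {k : ℕ} (t : Fin k → Bool × Bool) :
    (univ.filter fun m => ¬ (t m).2 = true).card
      = fibcnt t (false, false) + fibcnt t (true, false) := by
  rw [fib_split t (fun x => ¬ x.2 = true)]
  have h : (univ.filter fun x : Bool × Bool => ¬ x.2 = true)
      = ({(false, false), (true, false)} : Finset (Bool × Bool)) := by decide
  rw [h, Finset.sum_insert (by decide), Finset.sum_singleton]

lemma card_b {k : ℕ} (t : Fin k → Bool × Bool) :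
    (univ.filter fun m => (t m).1 = true ∧ (t m).2 = false).card
      = fibcnt t (true, false) := by
  rw [fib_split t (fun x => x.1 = true ∧ x.2 = false)]
  have h : (univ.filter fun x : Bool × Bool => x.1 = true ∧ x.2 = false)
      = ({(true, false)} : Finset (Bool × Bool)) := by decide
  rw [h, Finset.sum_singleton]

lemma card_c {k : ℕ} (t : Fin k → Bool × Bool) :
    (univ.filter fun m => (t m).2 = true ∧ (t m).1 = false).card
      = fibcnt t (false, true) := by
  rw [fib_split t (fun x => x.2 = true ∧ x.1 = false)]
  have h : (univ.filter fun x : Bool × Bool => x.2 = true ∧ x.1 = false)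
      = ({(false, true)} : Finset (Bool × Bool)) := by decide
  rw [h, Finset.sum_singleton]

noncomputable def Gfun (p : ℝ) (n2 : ℕ) (a b c d : ℕ) : ℝ :=
  if 1 ≤ b ∧ 1 ≤ c then
    ((1 - p) ^ (2 * a) * (p * (1 - p)) ^ (b + c) * p ^ (2 * d))
      * (1 - p ^ d * (p ^ b + p ^ c - p ^ (b + c))) ^ n2
  else 0

lemma per_t (p : ℝ) (n2 k : ℕ) (t : Fin k → Bool × Bool) :
    (if ¬ leB (fun m => (t m).1) (fun m => (t m).2)
          ∧ ¬ leB (fun m => (t m).2) (fun m => (t m).1) then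
        WW p (fun m => (t m).1) * WW p (fun m => (t m).2)
          * (∑ s : Fin k → Bool,
              if ¬ leB (fun m => (t m).1) s ∧ ¬ leB (fun m => (t m).2) s
              then WW p s else 0) ^ n2
      else 0)
      = Gfun p n2 (fibcnt t (false, false)) (fibcnt t (true, false))
          (fibcnt t (false, true)) (fibcnt t (true, true)) := by
  classical
  set a := fibcnt t (false, false)
  set b := fibcnt t (true, false)
  set c := fibcnt t (false, true)
  set d := fibcnt t (true, true)
  have hcond : (¬ leB (fun m => (t m).1) (fun m => (t m).2)
      ∧ ¬ leB (fun m => (t m).2) (fun m => (t m).1)) ↔ (1 ≤ b ∧ 1 ≤ c) := by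
    rw [not_leB_iff, not_leB_iff]
    constructor
    · rintro ⟨h1, h2⟩
      constructor
      · calc 1 ≤ _ := h1
          _ = b := card_b t
      · calc 1 ≤ _ := h2
          _ = c := card_c t
    · rintro ⟨h1, h2⟩
      exact ⟨by rw [card_b t]; exact h1, by rw [card_c t]; exact h2⟩
  rw [if_congr hcond rfl rfl]
  unfold Gfun
  by_cases hbc : 1 ≤ b ∧ 1 ≤ c
  · rw [if_pos hbc, if_pos hbc]
    have hW : WW p (fun m => (t m).1) * WW p (fun m => (t m).2)
        = (1 - p) ^ (2 * a) * (p * (1 - p)) ^ (b + c) * p ^ (2 * d) := by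
      rw [WW_eval, WW_eval, card_u, card_v, card_nu, card_nv, mul_pow]
      ring
    have hT : (∑ s : Fin k → Bool,
        if ¬ leB (fun m => (t m).1) s ∧ ¬ leB (fun m => (t m).2) s
        then WW p s else 0)
        = 1 - p ^ d * (p ^ b + p ^ c - p ^ (b + c)) := by
      rw [T_lemma, card_u, card_v, card_uv]
      ring
    rw [hW, hT]
  · rw [if_neg hbc, if_neg hbc]

def goodB {k n : ℕ} (c : Fin n → Fin k → Bool) (i0 i1 : Fin n) : Prop :=
  (∀ j, j ≠ i0 → ¬ leB (c i0) (c j)) ∧ (∀ j, j ≠ i1 → ¬ leB (c i1) (c j))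

lemma good_cons {k n2 : ℕ} (u v : Fin k → Bool) (r : Fin n2 → Fin k → Bool) :
    goodB (Fin.cons u (Fin.cons v r) : Fin (n2+2) → Fin k → Bool) 0 1
      ↔ (¬ leB u v ∧ ¬ leB v u ∧ ∀ j, ¬ leB u (r j) ∧ ¬ leB v (r j)) := by
  set c : Fin (n2+2) → Fin k → Bool := Fin.cons u (Fin.cons v r) with hc
  have h0 : c 0 = u := rfl
  have h1 : c 1 = v := by
    rw [hc, ← Fin.succ_zero_eq_one, Fin.cons_succ, Fin.cons_zero]
  have h2 : ∀ j : Fin n2, c j.succ.succ = r j := by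
    intro j; rw [hc, Fin.cons_succ, Fin.cons_succ]
  have hne10 : (1 : Fin (n2+2)) ≠ 0 := by
    rw [← Fin.succ_zero_eq_one]; exact Fin.succ_ne_zero _
  have hness : ∀ j : Fin n2, (j.succ.succ : Fin (n2+2)) ≠ 1 := by
    intro j
    rw [← Fin.succ_zero_eq_one]
    exact fun h => Fin.succ_ne_zero _ (Fin.succ_injective _ h)
  unfold goodB
  constructor
  · rintro ⟨hA, hB⟩
    refine ⟨?_, ?_, fun j => ⟨?_, ?_⟩⟩
    · have := hA 1 hne10; rwa [h0, h1] at this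
    · have := hB 0 hne10.symm; rwa [h0, h1] at this
    · have := hA j.succ.succ (Fin.succ_ne_zero _); rwa [h0, h2] at this
    · have := hB j.succ.succ (hness j); rwa [h1, h2] at this
  · rintro ⟨huv, hvu, hr⟩
    constructor
    · intro j
      refine Fin.cases (fun hj => absurd rfl hj) (fun j' _ => ?_) j
      rw [h0]
      refine Fin.cases ?_ (fun j'' => ?_) j'
      · rw [show ((0 : Fin (n2+1)).succ) = (1 : Fin (n2+2)) from Fin.succ_zero_eq_one, h1]
        exact huv
      · rw [h2]
        exact (hr j'').1
    · intro j
      refine Fin.cases (fun _ => ?_) (fun j' => ?_) j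
      · rw [h0, h1]
        exact hvu
      · refine Fin.cases (fun hj => ?_) (fun j'' _ => ?_) j'
        · exact absurd Fin.succ_zero_eq_one hj
        · rw [h1, h2]
          exact (hr j'').2

lemma weight_cons (p : ℝ) {k n2 : ℕ} (u v : Fin k → Bool) (r : Fin n2 → Fin k → Bool) :
    ∏ i, ∏ m, wB p ((Fin.cons u (Fin.cons v r) : Fin (n2+2) → Fin k → Bool) i m)
      = WW p u * (WW p v * ∏ j, WW p (r j)) := by
  have : ∀ n (c : Fin n → Fin k → Bool),
      ∏ i, ∏ m, wB p (c i m) = ∏ i, WW p (c i) := fun n c => rfl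
  rw [this]
  rw [Fin.prod_univ_succ]
  have h3 : ∏ i : Fin (n2+1), WW p ((Fin.cons u (Fin.cons v r) : Fin (n2+2) → Fin k → Bool) i.succ)
      = WW p v * ∏ j, WW p (r j) := by
    have hstep : ∀ i : Fin (n2+1),
        WW p ((Fin.cons u (Fin.cons v r) : Fin (n2+2) → Fin k → Bool) i.succ)
          = WW p ((Fin.cons v r : Fin (n2+1) → Fin k → Bool) i) := fun i => by
        rw [Fin.cons_succ]
    rw [Finset.prod_congr rfl fun (i : Fin (n2+1)) _ => hstep i]
    rw [Fin.prod_univ_succ, Fin.cons_zero]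
    exact congrArg _ (Finset.prod_congr rfl fun j _ => by rw [Fin.cons_succ])
  rw [h3, show (Fin.cons u (Fin.cons v r) : Fin (n2+2) → Fin k → Bool) 0 = u from rfl]

lemma inner_pow (p : ℝ) {k : ℕ} (n2 : ℕ) (u v : Fin k → Bool) :
    ∑ r : Fin n2 → Fin k → Bool,
        (if ∀ j, ¬ leB u (r j) ∧ ¬ leB v (r j) then ∏ j, WW p (r j) else 0)
      = (∑ s : Fin k → Bool, if ¬ leB u s ∧ ¬ leB v s then WW p s else 0) ^ n2 := by
  classical
  have hterm : ∀ r : Fin n2 → Fin k → Bool,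
      (if ∀ j, ¬ leB u (r j) ∧ ¬ leB v (r j) then ∏ j, WW p (r j) else 0)
        = ∏ j, (if ¬ leB u (r j) ∧ ¬ leB v (r j) then WW p (r j) else 0) := by
    intro r
    by_cases h : ∀ j, ¬ leB u (r j) ∧ ¬ leB v (r j)
    · rw [if_pos h]; exact Finset.prod_congr rfl fun j _ => (if_pos (h j)).symm
    · rw [if_neg h]
      obtain ⟨j, hj⟩ := not_forall.1 h
      exact (Finset.prod_eq_zero (mem_univ j) (by rw [if_neg hj])).symm
  rw [Finset.sum_congr rfl fun r _ => hterm r]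
  have hps := Finset.prod_univ_sum (fun _ : Fin n2 => (univ : Finset (Fin k → Bool)))
    (fun _ s => if ¬ leB u s ∧ ¬ leB v s then WW p s else 0)
  rw [Fintype.piFinset_univ] at hps
  rw [← hps, Finset.prod_const, card_univ, Fintype.card_fin]

instance {k n : ℕ} (c : Fin n → Fin k → Bool) (i0 i1 : Fin n) : Decidable (goodB c i0 i1) := by
  unfold goodB
  infer_instance

set_option maxHeartbeats 1000000 in
lemma partB (p : ℝ) (k n2 : ℕ) :
    ∑ c ∈ (univ : Finset (Fin (n2+2) → Fin k → Bool)).filter (fun c => goodB c 0 1),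
        ∏ i, ∏ m, wB p (c i m)
      = ∑ a ∈ range (k+1), ∑ b ∈ range (k+1), ∑ c ∈ range (k+1), ∑ d ∈ range (k+1),
          if a + b + c + d = k then
            ((k.factorial : ℝ) / (a.factorial * b.factorial * c.factorial * d.factorial))
              * Gfun p n2 a b c d
          else 0 := by
  classical
  rw [Finset.sum_filter]
  have e1 : ∑ c : Fin (n2+2) → Fin k → Bool,
      (if goodB c 0 1 then ∏ i, ∏ m, wB p (c i m) else 0)
      = ∑ x : (Fin k → Bool) × (Fin (n2+1) → Fin k → Bool),
          (if goodB ((Fin.cons x.1 x.2 : Fin (n2+2) → Fin k → Bool)) 0 1 then ∏ i, ∏ m, wB p ((Fin.cons x.1 x.2 : Fin (n2+2) → Fin k → Bool) i m) else 0) :=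
    (Fintype.sum_equiv (Fin.consEquiv fun _ => (Fin k → Bool)) _ _ fun x => rfl).symm
  rw [e1, Fintype.sum_prod_type]
  have e2 : ∀ u : Fin k → Bool,
      ∑ w : Fin (n2+1) → Fin k → Bool,
        (if goodB ((Fin.cons u w : Fin (n2+2) → Fin k → Bool)) 0 1 then ∏ i, ∏ m, wB p ((Fin.cons u w : Fin (n2+2) → Fin k → Bool) i m) else 0)
      = ∑ y : (Fin k → Bool) × (Fin n2 → Fin k → Bool),
          (if goodB ((Fin.cons u (Fin.cons y.1 y.2) : Fin (n2+2) → Fin k → Bool)) 0 1 then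
            ∏ i, ∏ m, wB p ((Fin.cons u (Fin.cons y.1 y.2) : Fin (n2+2) → Fin k → Bool) i m) else 0) := fun u =>
    (Fintype.sum_equiv (Fin.consEquiv fun _ => (Fin k → Bool)) _ _ fun y => rfl).symm
  rw [Finset.sum_congr rfl fun u _ => e2 u]
  have e3 : ∀ u : Fin k → Bool,
      ∑ y : (Fin k → Bool) × (Fin n2 → Fin k → Bool),
        (if goodB ((Fin.cons u (Fin.cons y.1 y.2) : Fin (n2+2) → Fin k → Bool)) 0 1 then
          ∏ i, ∏ m, wB p ((Fin.cons u (Fin.cons y.1 y.2) : Fin (n2+2) → Fin k → Bool) i m) else 0)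
      = ∑ v : Fin k → Bool, ∑ r : Fin n2 → Fin k → Bool,
          (if goodB ((Fin.cons u (Fin.cons v r) : Fin (n2+2) → Fin k → Bool)) 0 1 then
            ∏ i, ∏ m, wB p ((Fin.cons u (Fin.cons v r) : Fin (n2+2) → Fin k → Bool) i m) else 0) := fun u =>
    Fintype.sum_prod_type _
  rw [Finset.sum_congr rfl fun u _ => e3 u]
  have step : ∀ u v : Fin k → Bool,
      ∑ r : Fin n2 → Fin k → Bool,
        (if goodB ((Fin.cons u (Fin.cons v r) : Fin (n2+2) → Fin k → Bool)) 0 1 then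
          ∏ i, ∏ m, wB p ((Fin.cons u (Fin.cons v r) : Fin (n2+2) → Fin k → Bool) i m) else 0)
      = if ¬ leB u v ∧ ¬ leB v u then
          WW p u * WW p v
            * (∑ s : Fin k → Bool, if ¬ leB u s ∧ ¬ leB v s then WW p s else 0) ^ n2
        else 0 := by
    intro u v
    by_cases huv : ¬ leB u v ∧ ¬ leB v u
    · rw [if_pos huv, ← inner_pow p n2 u v, Finset.mul_sum]
      refine Finset.sum_congr rfl fun r _ => ?_
      rw [if_congr (good_cons u v r) rfl rfl, weight_cons]
      by_cases hr : ∀ j, ¬ leB u (r j) ∧ ¬ leB v (r j)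
      · rw [if_pos ⟨huv.1, huv.2, hr⟩, if_pos hr]
        ring
      · rw [if_neg (fun hh => hr hh.2.2), if_neg hr]
        ring
    · rw [if_neg huv]
      refine Finset.sum_eq_zero fun r _ => ?_
      rw [if_neg]
      intro hh
      rw [good_cons] at hh
      exact huv ⟨hh.1, hh.2.1⟩
  rw [Finset.sum_congr rfl fun u _ => Finset.sum_congr rfl fun v _ => step u v]
  have e5 : ∑ q : (Fin k → Bool) × (Fin k → Bool),
      (if ¬ leB q.1 q.2 ∧ ¬ leB q.2 q.1 then
        WW p q.1 * WW p q.2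
          * (∑ s : Fin k → Bool, if ¬ leB q.1 s ∧ ¬ leB q.2 s then WW p s else 0) ^ n2
      else 0)
      = ∑ u : Fin k → Bool, ∑ v : Fin k → Bool,
          (if ¬ leB u v ∧ ¬ leB v u then
            WW p u * WW p v
              * (∑ s : Fin k → Bool, if ¬ leB u s ∧ ¬ leB v s then WW p s else 0) ^ n2
          else 0) := Fintype.sum_prod_type _
  rw [← e5]
  have e4 : ∑ q : (Fin k → Bool) × (Fin k → Bool),
      (if ¬ leB q.1 q.2 ∧ ¬ leB q.2 q.1 then
        WW p q.1 * WW p q.2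
          * (∑ s : Fin k → Bool, if ¬ leB q.1 s ∧ ¬ leB q.2 s then WW p s else 0) ^ n2
      else 0)
      = ∑ t : Fin k → Bool × Bool,
          (if ¬ leB (fun m => (t m).1) (fun m => (t m).2)
              ∧ ¬ leB (fun m => (t m).2) (fun m => (t m).1) then
            WW p (fun m => (t m).1) * WW p (fun m => (t m).2)
              * (∑ s : Fin k → Bool,
                  if ¬ leB (fun m => (t m).1) s ∧ ¬ leB (fun m => (t m).2) s
                  then WW p s else 0) ^ n2
          else 0) :=
    (Fintype.sum_equiv (Equiv.arrowProdEquivProdArrow (Fin k) (fun _ => Bool) (fun _ => Bool)) _ _ fun t => rfl).symm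
  rw [e4]
  rw [Finset.sum_congr rfl fun t _ => per_t p n2 k t]
  rw [sum_fibcnt_group k (fun f => Gfun p n2 (f (false, false)) (f (true, false))
    (f (false, true)) (f (true, true)))]
  exact sum_piAntidiag_bb k (Gfun p n2)

open MeasureTheory ProbabilityTheory in
lemma partA {Ω : Type*} [MeasurableSpace Ω] (P : Measure Ω) [IsProbabilityMeasure P]
    (p : ℝ) (hp : p ∈ Set.Ioo (0 : ℝ) 1)
    (X : ℕ → ℕ → Ω → ℝ)
    (hmeas : ∀ i j, Measurable (X i j))
    (hindep : iIndepFun (fun q : ℕ × ℕ => X q.1 q.2) P)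
    (hval : ∀ i j ω, X i j ω = 0 ∨ X i j ω = 1)
    (hp1 : ∀ i j, P {ω | X i j ω = 1} = ENNReal.ofReal p)
    (k n2 : ℕ)
    (IsParetoMax : (ℕ → ℕ → Ω → ℝ) → ℕ → ℕ → ℕ → Ω → Prop)
    (hIPM : ∀ Y kk nn ii ω, IsParetoMax Y kk nn ii ω ↔
      ∀ j < nn, j ≠ ii → ¬ (∀ m < kk, Y ii m ω ≤ Y j m ω)) :
    P {ω | IsParetoMax X k (n2+2) 0 ω ∧ IsParetoMax X k (n2+2) 1 ω}
      = ∑ c ∈ (univ : Finset (Fin (n2+2) → Fin k → Bool)).filter (fun c => goodB c 0 1),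
          ∏ i, ∏ m, ENNReal.ofReal (wB p (c i m)) := by
  classical
  set n := n2 + 2 with hn
  set val : Bool → ℝ := fun b => if b then 1 else 0 with hvaldef
  set A : (Fin n → Fin k → Bool) → Set Ω := fun c =>
    {ω | ∀ i : Fin n, ∀ m : Fin k, X i m ω = val (c i m)} with hA
  have hv0 : ((0 : Fin n) : ℕ) = 0 := rfl
  have hv1 : ((1 : Fin n) : ℕ) = 1 := Fin.val_one n2
  -- order translation
  have hle : ∀ ω c, ω ∈ A c → ∀ i j : Fin n,
      ((∀ m' < k, X i m' ω ≤ X j m' ω) ↔ leB (c i) (c j)) := by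
    intro ω c hω i j
    constructor
    · intro h m hm
      have h2 := h m m.isLt
      rw [hω i m, hω j m, hm] at h2
      cases hc : c j m
      · rw [hc] at h2
        simp only [val] at h2
        norm_num at h2
      · rfl
    · intro hL m' hm'
      have e1 : X i m' ω = val (c i ⟨m', hm'⟩) := hω i ⟨m', hm'⟩
      have e2 : X j m' ω = val (c j ⟨m', hm'⟩) := hω j ⟨m', hm'⟩
      rw [e1, e2]
      cases hc : c i ⟨m', hm'⟩
      · cases c j ⟨m', hm'⟩ <;> simp [val] <;> norm_num
      · rw [hL ⟨m', hm'⟩ hc]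
  -- event characterization on atoms
  have hEA : ∀ ω c, ω ∈ A c →
      ((IsParetoMax X k n 0 ω ∧ IsParetoMax X k n 1 ω) ↔ goodB c 0 1) := by
    intro ω c hω
    rw [hIPM, hIPM]
    unfold goodB
    constructor
    · rintro ⟨h0, h1⟩
      constructor
      · intro j hj
        have hjne : (j : ℕ) ≠ 0 := by
          intro h
          exact hj (Fin.ext (by rw [h, hv0]))
        have := h0 j j.isLt hjne
        rw [← hle ω c hω 0 j, hv0]
        exact this
      · intro j hj
        have hjne : (j : ℕ) ≠ 1 := by
          intro h
          exact hj (Fin.ext (by rw [h, hv1]))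
        have := h1 j j.isLt hjne
        rw [← hle ω c hω 1 j, hv1]
        exact this
    · rintro ⟨h0, h1⟩
      constructor
      · intro j hjn hjne
        have h2 := h0 ⟨j, hjn⟩ (by
          intro h
          apply hjne
          have := congrArg Fin.val h
          rwa [hv0] at this)
        rw [← hle ω c hω 0 ⟨j, hjn⟩, hv0] at h2
        exact h2
      · intro j hjn hjne
        have h2 := h1 ⟨j, hjn⟩ (by
          intro h
          apply hjne
          have := congrArg Fin.val h
          rwa [hv1] at this)
        rw [← hle ω c hω 1 ⟨j, hjn⟩, hv1] at h2
        exact h2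
  -- cover
  have hcover : {ω | IsParetoMax X k n 0 ω ∧ IsParetoMax X k n 1 ω}
      = ⋃ c ∈ ((univ : Finset (Fin n → Fin k → Bool)).filter (fun c => goodB c 0 1)), A c := by
    ext ω
    simp only [Set.mem_setOf_eq, Set.mem_iUnion, Finset.mem_coe, Finset.mem_filter,
      Finset.mem_univ, true_and, exists_prop]
    constructor
    · intro h
      set c : Fin n → Fin k → Bool := fun i m => if X i m ω = 1 then true else false with hc
      have hωc : ω ∈ A c := by
        intro i m
        by_cases h1 : X (i : ℕ) (m : ℕ) ω = 1
        · simp [hc, val, h1]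
        · have h0 : X (i : ℕ) (m : ℕ) ω = 0 := (hval i m ω).resolve_right h1
          simp [hc, val, h1, h0]
      exact ⟨c, (hEA ω c hωc).1 h, hωc⟩
    · rintro ⟨c, hc, hωc⟩
      exact (hEA ω c hωc).2 hc
  -- measurability of atoms
  have hAmeas : ∀ c, MeasurableSet (A c) := by
    intro c
    have : A c = ⋂ i : Fin n, ⋂ m : Fin k, (X i m) ⁻¹' {val (c i m)} := by
      ext ω
      simp [hA, Set.mem_iInter]
    rw [this]
    exact MeasurableSet.iInter fun i => MeasurableSet.iInter fun m =>
      hmeas _ _ (measurableSet_singleton _)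
  -- disjointness
  have hdisj : (↑((univ : Finset (Fin n → Fin k → Bool)).filter (fun c => goodB c 0 1)) :
      Set (Fin n → Fin k → Bool)).PairwiseDisjoint A := by
    intro c1 _ c2 _ hne
    refine Set.disjoint_left.2 fun ω hω1 hω2 => hne ?_
    funext i m
    have e1 := hω1 i m
    have e2 := hω2 i m
    rw [e1] at e2
    cases hb1 : c1 i m <;> cases hb2 : c2 i m <;> rw [hb1, hb2] at e2 <;>
      simp [val] at e2 ⊢ <;> norm_num at e2
  rw [hcover, measure_biUnion_finset hdisj (fun c _ => hAmeas c)]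
  -- per-atom probability
  refine Finset.sum_congr rfl fun c _ => ?_
  set cN : ℕ × ℕ → Bool := fun q =>
    if h : q.1 < n ∧ q.2 < k then c ⟨q.1, h.1⟩ ⟨q.2, h.2⟩ else false with hcN
  set sets : ℕ × ℕ → Set Ω := fun q => X q.1 q.2 ⁻¹' {val (cN q)} with hsets
  set S : Finset (ℕ × ℕ) := Finset.range n ×ˢ Finset.range k with hS
  have hAeq : A c = ⋂ q ∈ S, sets q := by
    ext ω
    simp only [Set.mem_iInter, hA, Set.mem_setOf_eq, Finset.mem_product, Finset.mem_range,
      Set.mem_preimage, Set.mem_singleton_iff, hS]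
    constructor
    · rintro h ⟨i, m⟩ hq
      have hin : i < n ∧ m < k := ⟨hq.1, hq.2⟩
      show X i m ω = val (cN (i, m))
      rw [hcN]
      simp only [dif_pos hin]
      exact h ⟨i, hin.1⟩ ⟨m, hin.2⟩
    · intro h i m
      have h2 := h ((i : ℕ), (m : ℕ)) ⟨i.isLt, m.isLt⟩
      have h3 : X (i : ℕ) (m : ℕ) ω = val (cN ((i : ℕ), (m : ℕ))) := h2
      have h4 : cN ((i : ℕ), (m : ℕ)) = c i m := by
        rw [hcN]
        simp only [dif_pos (And.intro i.isLt m.isLt)]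
      rw [h4] at h3
      exact h3
  have hsingle : ∀ (i j : ℕ) (b : Bool),
      P (X i j ⁻¹' {val b}) = ENNReal.ofReal (wB p b) := by
    intro i j b
    cases b
    · have hc : X i j ⁻¹' {val false} = {ω | X i j ω = 1}ᶜ := by
        ext ω
        simp only [Set.mem_preimage, Set.mem_singleton_iff, Set.mem_compl_iff,
          Set.mem_setOf_eq, val]
        constructor
        · intro h h1
          rw [h1] at h
          norm_num at h
        · intro h
          simpa using (hval i j ω).resolve_right h
      have hms : MeasurableSet {ω | X i j ω = 1} := hmeas i j (measurableSet_singleton 1)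
      rw [hc, measure_compl hms (measure_ne_top P _), hp1 i j]
      simp only [wB, measure_univ, if_false, Bool.false_eq_true]
      rw [ENNReal.ofReal_sub 1 hp.1.le, ENNReal.ofReal_one]
    · have hc : X i j ⁻¹' {val true} = {ω | X i j ω = 1} := by
        ext ω
        simp [val]
      rw [hc, hp1 i j]
      simp [wB]
  have hprod := hindep.meas_biInter (S := S) (s := sets) (fun q _ =>
    ⟨{val (cN q)}, measurableSet_singleton _, rfl⟩)
  rw [hAeq, hprod]
  have hterm : ∀ q ∈ S, P (sets q) = ENNReal.ofReal (wB p (cN q)) := by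
    intro q _
    exact hsingle q.1 q.2 (cN q)
  rw [Finset.prod_congr rfl hterm, hS, Finset.prod_product]
  rw [← Fin.prod_univ_eq_prod_range (fun i => ∏ m ∈ Finset.range k,
    ENNReal.ofReal (wB p (cN (i, m)))) n]
  refine Finset.prod_congr rfl fun i _ => ?_
  rw [← Fin.prod_univ_eq_prod_range (fun m => ENNReal.ofReal (wB p (cN ((i : ℕ), m)))) k]
  refine Finset.prod_congr rfl fun m _ => ?_
  have h4 : cN ((i : ℕ), (m : ℕ)) = c i m := by
    rw [hcN]
    simp only [dif_pos (And.intro i.isLt m.isLt)]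
  rw [h4]


end Aux

/-- for iid Bernoulli(p) coordinates, for all `k ≥ 1` and `n ≥ 2`, the
probability that both the first and second vectors belong to the Pareto front equals
`Σ_{a,d ≥ 0, b,c ≥ 1, a+b+c+d = k} k!/(a! b! c! d!) (1-p)^{2a} [p(1-p)]^{b+c} p^{2d}
  [1 - p^d (p^b + p^c - p^{b+c})]^{n-2}`. -/
theorem stmt_17 {Ω : Type*} [MeasurableSpace Ω] (P : Measure Ω) [IsProbabilityMeasure P]
    (p : ℝ) (hp : p ∈ Set.Ioo (0 : ℝ) 1)
    (X : ℕ → ℕ → Ω → ℝ)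
    (hmeas : ∀ i j, Measurable (X i j))
    (hindep : iIndepFun (fun q : ℕ × ℕ => X q.1 q.2) P)
    (hval : ∀ i j ω, X i j ω = 0 ∨ X i j ω = 1)
    (hp1 : ∀ i j, P {ω | X i j ω = 1} = ENNReal.ofReal p)
    (k n : ℕ) (hk : 1 ≤ k) (hn : 2 ≤ n) :
    (P {ω | IsParetoMax X k n 0 ω ∧ IsParetoMax X k n 1 ω}).toReal
      = ∑ a ∈ Finset.range (k + 1), ∑ b ∈ Finset.range (k + 1),
          ∑ c ∈ Finset.range (k + 1), ∑ d ∈ Finset.range (k + 1),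
          if a + b + c + d = k ∧ 1 ≤ b ∧ 1 ≤ c then
            ((k.factorial : ℝ)
                / (a.factorial * b.factorial * c.factorial * d.factorial))
              * ((1 - p) ^ (2 * a) * (p * (1 - p)) ^ (b + c) * p ^ (2 * d))
              * (1 - p ^ d * (p ^ b + p ^ c - p ^ (b + c))) ^ (n - 2)
          else 0 := by
  classical
  obtain ⟨n2, rfl⟩ : ∃ n2, n = n2 + 2 := ⟨n - 2, by omega⟩
  rw [partA P p hp X hmeas hindep hval hp1 k n2 IsParetoMax
    (fun Y kk nn ii ω => Iff.rfl)]
  have hw_nonneg : ∀ b, 0 ≤ wB p b := by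
    intro b
    cases b <;> simp [wB] <;> linarith [hp.1.le, hp.2.le]
  have h1 : ∀ c : Fin (n2+2) → Fin k → Bool,
      ∏ i, ∏ m, ENNReal.ofReal (wB p (c i m))
        = ENNReal.ofReal (∏ i, ∏ m, wB p (c i m)) := by
    intro c
    rw [ENNReal.ofReal_prod_of_nonneg (fun i _ => Finset.prod_nonneg fun m _ => hw_nonneg _)]
    exact Finset.prod_congr rfl fun i _ =>
      (ENNReal.ofReal_prod_of_nonneg (fun m _ => hw_nonneg _)).symm
  rw [Finset.sum_congr rfl fun c _ => h1 c,
    ← ENNReal.ofReal_sum_of_nonneg (fun c _ =>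
      Finset.prod_nonneg fun i _ => Finset.prod_nonneg fun m _ => hw_nonneg _),
    ENNReal.toReal_ofReal (Finset.sum_nonneg fun c _ =>
      Finset.prod_nonneg fun i _ => Finset.prod_nonneg fun m _ => hw_nonneg _)]
  rw [partB p k n2]
  simp only [Nat.add_sub_cancel]
  refine Finset.sum_congr rfl fun a _ => Finset.sum_congr rfl fun b _ =>
    Finset.sum_congr rfl fun c _ => Finset.sum_congr rfl fun d _ => ?_
  by_cases hsum : a + b + c + d = k
  · by_cases hbc : 1 ≤ b ∧ 1 ≤ c
    · rw [if_pos hsum, if_pos ⟨hsum, hbc.1, hbc.2⟩]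
      unfold Gfun
      rw [if_pos hbc]
      ring
    · rw [if_pos hsum, if_neg (fun hh => hbc ⟨hh.2.1, hh.2.2⟩)]
      unfold Gfun
      rw [if_neg hbc, mul_zero]
  · rw [if_neg hsum, if_neg (fun hh => hsum hh.1)]
end
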